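/- arXiv:2005.08190 — 12 statements merged into one kernel-verified Lean document; each statement's English description precedes it below -/
import Mathlib

section
/- For every 1 < i ≤ m, DR[i,1].U = (a_i − b_1)^2, and for every 1 < j ≤ n, DR[1,j].L = (a_1 − b_j)^2. Moreover, for every 2 ≤ i ≤ m and 2 ≤ j ≤ n, letting z = min{DR[i−1,j].L, DR[i,j−1].U, 0} + (a_i − b_j)^2, one has DR[i,j].U = z − DR[i−1,j].L and DR[i,j].L = z − DR[i,j−1].U. -/
/-- The DTW dynamic programming table recurrence for sequences `a` (length `m`)
and `b` (length `n`), both indexed from 1. -/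
def DTWTable (a b : ℕ → ℝ) (m n : ℕ) (D : ℕ → ℕ → ℝ) : Prop :=
  D 1 1 = (a 1 - b 1) ^ 2 ∧
  (∀ i, 1 < i → i ≤ m → D i 1 = D (i - 1) 1 + (a i - b 1) ^ 2) ∧
  (∀ j, 1 < j → j ≤ n → D 1 j = D 1 (j - 1) + (a 1 - b j) ^ 2) ∧
  (∀ i j, 1 < i → i ≤ m → 1 < j → j ≤ n →
    D i j = min (min (D i (j - 1)) (D (i - 1) j)) (D (i - 1) (j - 1)) + (a i - b j) ^ 2)

theorem stmt_1 (a b : ℕ → ℝ) (m n : ℕ) (hm : 1 ≤ m) (hn : 1 ≤ n)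
    (D : ℕ → ℕ → ℝ) (hD : DTWTable a b m n D)
    (U L : ℕ → ℕ → ℝ)
    (hU : ∀ i j, 2 ≤ i → i ≤ m → 1 ≤ j → j ≤ n → U i j = D i j - D (i - 1) j)
    (hU1 : ∀ j, 1 ≤ j → j ≤ n → U 1 j = 0)
    (hL : ∀ i j, 1 ≤ i → i ≤ m → 2 ≤ j → j ≤ n → L i j = D i j - D i (j - 1))
    (hL1 : ∀ i, 1 ≤ i → i ≤ m → L i 1 = 0) :
    (∀ i, 1 < i → i ≤ m → U i 1 = (a i - b 1) ^ 2) ∧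
    (∀ j, 1 < j → j ≤ n → L 1 j = (a 1 - b j) ^ 2) ∧
    (∀ i j, 2 ≤ i → i ≤ m → 2 ≤ j → j ≤ n →
      U i j = (min (min (L (i - 1) j) (U i (j - 1))) 0 + (a i - b j) ^ 2) - L (i - 1) j ∧
      L i j = (min (min (L (i - 1) j) (U i (j - 1))) 0 + (a i - b j) ^ 2) - U i (j - 1)) := by
  obtain ⟨h11, hcol, hrow, hrec⟩ := hD
  refine ⟨?_, ?_, ?_⟩
  · intro i hi him
    rw [hU i 1 hi him le_rfl hn, hcol i hi him]; ring
  · intro j hj hjn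
    rw [hL 1 j le_rfl hm hj hjn, hrow j hj hjn]; ring
  · intro i j hi him hj hjn
    have hLe : L (i - 1) j = D (i - 1) j - D (i - 1) (j - 1) :=
      hL _ _ (by omega) (by omega) hj hjn
    have hUe : U i (j - 1) = D i (j - 1) - D (i - 1) (j - 1) :=
      hU _ _ hi him (by omega) (by omega)
    have hUij : U i j = D i j - D (i - 1) j := hU _ _ hi him (by omega) hjn
    have hLij : L i j = D i j - D i (j - 1) := hL _ _ (by omega) him hj hjn
    have hDij := hrec i j hi him hj hjn
    have key : min (min (L (i - 1) j) (U i (j - 1))) 0 =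
        min (min (D i (j - 1)) (D (i - 1) j)) (D (i - 1) (j - 1)) - D (i - 1) (j - 1) := by
      rw [hLe, hUe, min_sub_sub_right,
        show (0:ℝ) = D (i - 1) (j - 1) - D (i - 1) (j - 1) by ring, min_sub_sub_right,
        min_comm (D (i - 1) j)]
    constructor
    · rw [key, hLe, hUij]; linarith [hDij]
    · rw [key, hUe, hLij]; linarith [hDij]
end

section
/- Let 2 ≤ i ≤ m and 2 ≤ j ≤ min(n, n′), and suppose b_j = b′_j. If DR[i,j].U ≠ DR′[i,j].U or DR[i,j].L ≠ DR′[i,j].L, then DR[i,j−1].U ≠ DR′[i,j−1].U or DR[i−1,j].L ≠ DR′[i−1,j].L. -/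
theorem stmt_2 (a b b' : ℕ → ℝ) (m n n' : ℕ) (hm : 1 ≤ m) (hn : 1 ≤ n) (hn' : 1 ≤ n')
    (D D' : ℕ → ℕ → ℝ) (hD : DTWTable a b m n D) (hD' : DTWTable a b' m n' D')
    (U L U' L' : ℕ → ℕ → ℝ)
    (hU : ∀ i j, 2 ≤ i → i ≤ m → 1 ≤ j → j ≤ n → U i j = D i j - D (i - 1) j)
    (hU1 : ∀ j, 1 ≤ j → j ≤ n → U 1 j = 0)
    (hL : ∀ i j, 1 ≤ i → i ≤ m → 2 ≤ j → j ≤ n → L i j = D i j - D i (j - 1))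
    (hL1 : ∀ i, 1 ≤ i → i ≤ m → L i 1 = 0)
    (hU' : ∀ i j, 2 ≤ i → i ≤ m → 1 ≤ j → j ≤ n' → U' i j = D' i j - D' (i - 1) j)
    (hU1' : ∀ j, 1 ≤ j → j ≤ n' → U' 1 j = 0)
    (hL' : ∀ i j, 1 ≤ i → i ≤ m → 2 ≤ j → j ≤ n' → L' i j = D' i j - D' i (j - 1))
    (hL1' : ∀ i, 1 ≤ i → i ≤ m → L' i 1 = 0) :
    ∀ i j, 2 ≤ i → i ≤ m → 2 ≤ j → j ≤ n → j ≤ n' → b j = b' j →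
      (U i j ≠ U' i j ∨ L i j ≠ L' i j) →
      (U i (j - 1) ≠ U' i (j - 1) ∨ L (i - 1) j ≠ L' (i - 1) j) := by
  intro i j hi him hj hjn hjn' hb h
  by_contra hc
  push_neg at hc
  obtain ⟨h1, h2⟩ := hc
  rw [hU i (j-1) hi him (by omega) (by omega), hU' i (j-1) hi him (by omega) (by omega)] at h1
  rw [hL (i-1) j (by omega) (by omega) hj hjn, hL' (i-1) j (by omega) (by omega) hj hjn'] at h2
  obtain ⟨-, -, -, hrec⟩ := hD
  obtain ⟨-, -, -, hrec'⟩ := hD'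
  have hdij := hrec i j (by omega) him (by omega) hjn
  have hdij' := hrec' i j (by omega) him (by omega) hjn'
  set x := D i (j-1); set y := D (i-1) j; set z := D (i-1) (j-1)
  set x' := D' i (j-1); set y' := D' (i-1) j; set z' := D' (i-1) (j-1)
  have hmin : min (min x' y') z' = min (min x y) z + (z' - z) := by
    have hx : x' = x + (z' - z) := by linarith
    have hy : y' = y + (z' - z) := by linarith
    have hz : z' = z + (z' - z) := by ring
    rw [← min_add_add_right, ← min_add_add_right, ← hx, ← hy, ← hz]
  rcases h with h | h
  · apply h
    rw [hU i j hi him (by omega) hjn, hU' i j hi him (by omega) hjn', hdij, hdij', hmin, hb]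
    linarith
  · apply h
    rw [hL i j (by omega) him hj hjn, hL' i j (by omega) him hj hjn', hdij, hdij', hmin, hb]
    linarith
end

section
/- If 2 ≤ j ≤ n and b_{j−1} = b_j, then D[i,j] ≥ D[i,j−1] for every 1 ≤ i ≤ m. Symmetrically, if 2 ≤ i ≤ m and a_{i−1} = a_i, then D[i,j] ≥ D[i−1,j] for every 1 ≤ j ≤ n. -/
theorem stmt_3 (a b : ℕ → ℝ) (m n : ℕ) (hm : 1 ≤ m) (hn : 1 ≤ n)
    (D : ℕ → ℕ → ℝ) (hD : DTWTable a b m n D) :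
    (∀ j, 2 ≤ j → j ≤ n → b (j - 1) = b j →
      ∀ i, 1 ≤ i → i ≤ m → D i (j - 1) ≤ D i j) ∧
    (∀ i, 2 ≤ i → i ≤ m → a (i - 1) = a i →
      ∀ j, 1 ≤ j → j ≤ n → D (i - 1) j ≤ D i j) := by
  obtain ⟨h11, hcol, hrow, hrec⟩ := hD
  constructor
  · intro j hj2 hjn hb i hi1 him
    induction i, hi1 using Nat.le_induction with
    | base =>
      have := hrow j (by omega) hjn
      nlinarith [sq_nonneg (a 1 - b j)]
    | succ i hi IH =>
      have IH' : D i (j - 1) ≤ D i j := IH (by omega)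
      have hs : (0:ℝ) ≤ (a (i+1) - b j) ^ 2 := sq_nonneg _
      -- Key: D (i+1) (j-1) ≤ D i (j-1) + (a (i+1) - b j)^2
      have K : D (i+1) (j - 1) ≤ D i (j - 1) + (a (i+1) - b j) ^ 2 := by
        rcases eq_or_lt_of_le hj2 with h2 | h2
        · have hj1 : j - 1 = 1 := by omega
          have := hcol (i+1) (by omega) (by omega)
          simp only [Nat.add_sub_cancel] at this
          rw [hj1, this, ← hb, hj1]
        · have := hrec (i+1) (j-1) (by omega) (by omega) (by omega) (by omega)
          simp only [Nat.add_sub_cancel] at this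
          rw [this, ← hb]
          have : min (min (D (i+1) (j-1-1)) (D i (j-1))) (D i (j-1-1)) ≤ D i (j-1) :=
            le_trans (min_le_left _ _) (min_le_right _ _)
          linarith
      have hE := hrec (i+1) j (by omega) (by omega) (by omega) hjn
      simp only [Nat.add_sub_cancel] at hE
      set A := D (i+1) (j-1) with hA
      set C := D i (j-1) with hC
      have hmin : min A C ≤ min (min A (D i j)) C :=
        le_min (le_min (min_le_left _ _) (le_trans (min_le_right _ _) IH'))
          (min_le_right _ _)
      rcases le_total A C with h | h
      · rw [min_eq_left h] at hmin; linarith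
      · rw [min_eq_right h] at hmin; linarith
  · intro i hi2 him ha j hj1 hjn
    induction j, hj1 using Nat.le_induction with
    | base =>
      have := hcol i (by omega) him
      nlinarith [sq_nonneg (a i - b 1)]
    | succ j hj IH =>
      have IH' : D (i-1) j ≤ D i j := IH (by omega)
      have hs : (0:ℝ) ≤ (a i - b (j+1)) ^ 2 := sq_nonneg _
      have K : D (i-1) (j+1) ≤ D (i-1) j + (a i - b (j+1)) ^ 2 := by
        rcases eq_or_lt_of_le hi2 with h2 | h2
        · have hi1 : i - 1 = 1 := by omega
          have := hrow (j+1) (by omega) (by omega)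
          simp only [Nat.add_sub_cancel] at this
          rw [hi1, this, ← ha, hi1]
        · have := hrec (i-1) (j+1) (by omega) (by omega) (by omega) (by omega)
          simp only [Nat.add_sub_cancel] at this
          rw [this, ← ha]
          have : min (min (D (i-1) j) (D (i-1-1) (j+1))) (D (i-1-1) j) ≤ D (i-1) j :=
            le_trans (min_le_left _ _) (min_le_left _ _)
          linarith
      have hE := hrec i (j+1) (by omega) him (by omega) hjn
      simp only [Nat.add_sub_cancel] at hE
      set A := D (i-1) (j+1) with hA
      set C := D (i-1) j with hC
      have hmin : min A C ≤ min (min (D i j) A) C :=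
        le_min (le_min (le_trans (min_le_right _ _) IH') (min_le_left _ _))
          (min_le_right _ _)
      rcases le_total A C with h | h
      · rw [min_eq_left h] at hmin; linarith
      · rw [min_eq_right h] at hmin; linarith
end

section
/- If 2 ≤ i ≤ m, 2 ≤ j ≤ n, a_{i−1} = a_i and b_{j−1} = b_j, then D[i,j] = D[i−1,j−1] + (a_i − b_j)^2. -/
lemma dtw_row_le (a b : ℕ → ℝ) (m n : ℕ) (D : ℕ → ℕ → ℝ) (hD : DTWTable a b m n D)
    (i : ℕ) (hi2 : 2 ≤ i) (him : i ≤ m) (ha : a (i - 1) = a i) :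
    ∀ j, 1 ≤ j → j ≤ n → D (i - 1) j ≤ D i j := by
  obtain ⟨h11, hcol, hrow, hrec⟩ := hD
  intro j
  induction j with
  | zero => intro h; omega
  | succ k ih =>
    intro _ hjn
    rcases Nat.lt_or_ge k 1 with hk | hk
    · have hk0 : k = 0 := by omega
      subst hk0
      rw [hcol i (by omega) him]
      nlinarith [sq_nonneg (a i - b 1)]
    · have hrecij := hrec i (k + 1) (by omega) him (by omega) hjn
      simp only [Nat.add_sub_cancel] at hrecij
      have hc0 : (0:ℝ) ≤ (a i - b (k + 1)) ^ 2 := sq_nonneg _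
      have hA : D (i - 1) (k + 1) ≤ D (i - 1) k + (a i - b (k + 1)) ^ 2 := by
        rcases Nat.lt_or_ge (i - 1) 2 with hi1 | hi1
        · have hi1' : i - 1 = 1 := by omega
          rw [hi1'] at ha
          have h := hrow (k + 1) (by omega) hjn
          simp only [Nat.add_sub_cancel] at h
          rw [hi1', h, ha]
        · have h := hrec (i - 1) (k + 1) (by omega) (by omega) (by omega) hjn
          simp only [Nat.add_sub_cancel] at h
          rw [h, ha]
          have := min_le_right (min (D (i-1) k) (D (i-1-1) (k+1))) (D (i-1-1) k)
          have := min_le_left (D (i-1) k) (D (i-1-1) (k+1))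
          have := min_le_left (min (D (i-1) k) (D (i-1-1) (k+1))) (D (i-1-1) k)
          linarith
      have hih := ih hk (by omega)
      rw [hrecij]
      rcases min_cases (min (D i k) (D (i - 1) (k + 1))) (D (i - 1) k) with ⟨h1, _⟩ | ⟨h1, _⟩ <;>
        rcases min_cases (D i k) (D (i - 1) (k + 1)) with ⟨h2, _⟩ | ⟨h2, _⟩ <;> linarith

lemma dtw_col_le (a b : ℕ → ℝ) (m n : ℕ) (D : ℕ → ℕ → ℝ) (hD : DTWTable a b m n D)
    (j : ℕ) (hj2 : 2 ≤ j) (hjn : j ≤ n) (hb : b (j - 1) = b j) :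
    ∀ i, 1 ≤ i → i ≤ m → D i (j - 1) ≤ D i j := by
  obtain ⟨h11, hcol, hrow, hrec⟩ := hD
  intro i
  induction i with
  | zero => intro h; omega
  | succ k ih =>
    intro _ him
    rcases Nat.lt_or_ge k 1 with hk | hk
    · have hk0 : k = 0 := by omega
      subst hk0
      rw [hrow j (by omega) hjn]
      nlinarith [sq_nonneg (a 1 - b j)]
    · have hrecij := hrec (k + 1) j (by omega) him hj2 hjn
      simp only [Nat.add_sub_cancel] at hrecij
      have hc0 : (0:ℝ) ≤ (a (k + 1) - b j) ^ 2 := sq_nonneg _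
      have hA : D (k + 1) (j - 1) ≤ D k (j - 1) + (a (k + 1) - b j) ^ 2 := by
        rcases Nat.lt_or_ge (j - 1) 2 with hj1 | hj1
        · have hj1' : j - 1 = 1 := by omega
          rw [hj1'] at hb
          have h := hcol (k + 1) (by omega) him
          simp only [Nat.add_sub_cancel] at h
          rw [hj1', h, hb]
        · have h := hrec (k + 1) (j - 1) (by omega) him (by omega) (by omega)
          simp only [Nat.add_sub_cancel] at h
          rw [h, hb]
          have := min_le_right (min (D (k+1) (j-1-1)) (D k (j-1))) (D k (j-1-1))
          have := min_le_right (D (k+1) (j-1-1)) (D k (j-1))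
          have := min_le_left (min (D (k+1) (j-1-1)) (D k (j-1))) (D k (j-1-1))
          linarith
      have hih := ih hk (by omega)
      rw [hrecij]
      rcases min_cases (min (D (k + 1) (j - 1)) (D k j)) (D k (j - 1)) with ⟨h1, _⟩ | ⟨h1, _⟩ <;>
        rcases min_cases (D (k + 1) (j - 1)) (D k j) with ⟨h2, _⟩ | ⟨h2, _⟩ <;> linarith

theorem stmt_4 (a b : ℕ → ℝ) (m n : ℕ) (hm : 1 ≤ m) (hn : 1 ≤ n)
    (D : ℕ → ℕ → ℝ) (hD : DTWTable a b m n D) :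
    ∀ i j, 2 ≤ i → i ≤ m → 2 ≤ j → j ≤ n → a (i - 1) = a i → b (j - 1) = b j →
      D i j = D (i - 1) (j - 1) + (a i - b j) ^ 2 := by
  intro i j hi2 him hj2 hjn ha hb
  have hrec := hD.2.2.2 i j (by omega) him (by omega) hjn
  have h1 : D (i - 1) (j - 1) ≤ D i (j - 1) :=
    dtw_row_le a b m n D hD i hi2 him ha (j - 1) (by omega) (by omega)
  have h2 : D (i - 1) (j - 1) ≤ D (i - 1) j :=
    dtw_col_le a b m n D hD j hj2 hjn hb (i - 1) (by omega) (by omega)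
  rw [hrec, min_eq_right (le_min h1 h2)]
end

section
/- If 3 ≤ i ≤ m, 3 ≤ j ≤ n, a_{i−2} = a_{i−1} = a_i and b_{j−2} = b_{j−1} = b_j, then D[i,j] − D[i−1,j] = D[i−1,j−1] − D[i−2,j−1] and D[i,j] − D[i,j−1] = D[i−1,j−1] − D[i−1,j−2] (that is, the differential representation satisfies DR[i,j].U = DR[i−1,j−1].U and DR[i,j].L = DR[i−1,j−1].L). -/
/-- One-step bound going down a column: `D r s ≤ D (r-1) s + cost`. -/
lemma dtw_step_row (a b : ℕ → ℝ) (m n : ℕ) (D : ℕ → ℕ → ℝ) (hD : DTWTable a b m n D)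
    (r s : ℕ) (hr : 2 ≤ r) (hrm : r ≤ m) (hs : 1 ≤ s) (hsn : s ≤ n) :
    D r s ≤ D (r - 1) s + (a r - b s) ^ 2 := by
  obtain ⟨h11, hrow, hcol, hrec⟩ := hD
  rcases eq_or_lt_of_le hs with h | h
  · rw [← h, hrow r (by omega) hrm]
  · rw [hrec r s (by omega) hrm (by omega) hsn]
    have h1 : min (min (D r (s - 1)) (D (r - 1) s)) (D (r - 1) (s - 1)) ≤ D (r - 1) s :=
      le_trans (min_le_left _ _) (min_le_right _ _)
    linarith

/-- One-step bound going along a row: `D r s ≤ D r (s-1) + cost`. -/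
lemma dtw_step_col (a b : ℕ → ℝ) (m n : ℕ) (D : ℕ → ℕ → ℝ) (hD : DTWTable a b m n D)
    (r s : ℕ) (hr : 1 ≤ r) (hrm : r ≤ m) (hs : 2 ≤ s) (hsn : s ≤ n) :
    D r s ≤ D r (s - 1) + (a r - b s) ^ 2 := by
  obtain ⟨h11, hrow, hcol, hrec⟩ := hD
  rcases eq_or_lt_of_le hr with h | h
  · rw [← h, hcol s (by omega) hsn]
  · rw [hrec r s (by omega) hrm (by omega) hsn]
    have h1 : min (min (D r (s - 1)) (D (r - 1) s)) (D (r - 1) (s - 1)) ≤ D r (s - 1) :=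
      le_trans (min_le_left _ _) (min_le_left _ _)
    linarith

/-- If the last two entries of `b` up to column `j` coincide, column `j-1` is
pointwise at most column `j`. -/
lemma dtw_col_mono (a b : ℕ → ℝ) (m n : ℕ) (D : ℕ → ℕ → ℝ) (hD : DTWTable a b m n D)
    (j : ℕ) (hj : 2 ≤ j) (hjn : j ≤ n) (hb : b (j - 1) = b j) :
    ∀ r, 1 ≤ r → r ≤ m → D r (j - 1) ≤ D r j := by
  obtain ⟨h11, hrow, hcol, hrec⟩ := hD
  intro r
  induction r with
  | zero => intro h; omega
  | succ k ih =>
    intro hr1 hrm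
    by_cases hk : k = 0
    · subst hk
      rw [hcol j (by omega) hjn]
      nlinarith [sq_nonneg (a 1 - b j)]
    · have ihk : D k (j - 1) ≤ D k j := ih (by omega) (by omega)
      have hS : D (k + 1) (j - 1) ≤ D k (j - 1) + (a (k + 1) - b (j - 1)) ^ 2 := by
        have := dtw_step_row a b m n D ⟨h11, hrow, hcol, hrec⟩ (k + 1) (j - 1)
          (by omega) hrm (by omega) (by omega)
        simpa using this
      rw [hb] at hS
      rw [hrec (k + 1) j (by omega) hrm (by omega) hjn]
      simp only [Nat.add_sub_cancel]
      have h0 : (0:ℝ) ≤ (a (k + 1) - b j) ^ 2 := sq_nonneg _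
      have hmin : D (k + 1) (j - 1) - (a (k + 1) - b j) ^ 2 ≤
          min (min (D (k + 1) (j - 1)) (D k j)) (D k (j - 1)) :=
        le_min (le_min (by linarith) (by linarith)) (by linarith)
      linarith
/-- If the last two entries of `a` up to row `i` coincide, row `i-1` is
pointwise at most row `i`. -/
lemma dtw_row_mono (a b : ℕ → ℝ) (m n : ℕ) (D : ℕ → ℕ → ℝ) (hD : DTWTable a b m n D)
    (i : ℕ) (hi : 2 ≤ i) (him : i ≤ m) (ha : a (i - 1) = a i) :
    ∀ s, 1 ≤ s → s ≤ n → D (i - 1) s ≤ D i s := by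
  obtain ⟨h11, hrow, hcol, hrec⟩ := hD
  intro s
  induction s with
  | zero => intro h; omega
  | succ k ih =>
    intro hs1 hsn
    by_cases hk : k = 0
    · subst hk
      rw [hrow i (by omega) him]
      nlinarith [sq_nonneg (a i - b 1)]
    · have ihk : D (i - 1) k ≤ D i k := ih (by omega) (by omega)
      have hS : D (i - 1) (k + 1) ≤ D (i - 1) k + (a (i - 1) - b (k + 1)) ^ 2 := by
        have := dtw_step_col a b m n D ⟨h11, hrow, hcol, hrec⟩ (i - 1) (k + 1)
          (by omega) (by omega) (by omega) hsn
        simpa using this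
      rw [ha] at hS
      rw [hrec i (k + 1) (by omega) him (by omega) hsn]
      simp only [Nat.add_sub_cancel]
      have h0 : (0:ℝ) ≤ (a i - b (k + 1)) ^ 2 := sq_nonneg _
      have hmin : D (i - 1) (k + 1) - (a i - b (k + 1)) ^ 2 ≤
          min (min (D i k) (D (i - 1) (k + 1))) (D (i - 1) k) :=
        le_min (le_min (by linarith) (by linarith)) (by linarith)
      linarith

/-- In a 2×2 block of equal values, the diagonal predecessor achieves the minimum. -/
lemma dtw_diag (a b : ℕ → ℝ) (m n : ℕ) (D : ℕ → ℕ → ℝ) (hD : DTWTable a b m n D)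
    (i j : ℕ) (hi : 2 ≤ i) (him : i ≤ m) (hj : 2 ≤ j) (hjn : j ≤ n)
    (ha : a (i - 1) = a i) (hb : b (j - 1) = b j) :
    D i j = D (i - 1) (j - 1) + (a i - b j) ^ 2 := by
  have h1 : D (i - 1) (j - 1) ≤ D (i - 1) j :=
    dtw_col_mono a b m n D hD j hj hjn hb (i - 1) (by omega) (by omega)
  have h2 : D (i - 1) (j - 1) ≤ D i (j - 1) :=
    dtw_row_mono a b m n D hD i hi him ha (j - 1) (by omega) (by omega)
  obtain ⟨h11, hrow, hcol, hrec⟩ := hD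
  rw [hrec i j (by omega) him (by omega) hjn,
    min_eq_right (le_min h2 h1)]

theorem stmt_5 (a b : ℕ → ℝ) (m n : ℕ) (hm : 1 ≤ m) (hn : 1 ≤ n)
    (D : ℕ → ℕ → ℝ) (hD : DTWTable a b m n D) :
    ∀ i j, 3 ≤ i → i ≤ m → 3 ≤ j → j ≤ n →
      a (i - 2) = a (i - 1) → a (i - 1) = a i →
      b (j - 2) = b (j - 1) → b (j - 1) = b j →
      D i j - D (i - 1) j = D (i - 1) (j - 1) - D (i - 2) (j - 1) ∧
      D i j - D i (j - 1) = D (i - 1) (j - 1) - D (i - 1) (j - 2) := by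
  intro i j hi him hj hjn ha1 ha2 hb1 hb2
  have e1 : D i j = D (i - 1) (j - 1) + (a i - b j) ^ 2 :=
    dtw_diag a b m n D hD i j (by omega) him (by omega) hjn ha2 hb2
  have e2 : D (i - 1) j = D (i - 2) (j - 1) + (a i - b j) ^ 2 := by
    have := dtw_diag a b m n D hD (i - 1) j (by omega) (by omega) (by omega) hjn
      (by rw [show i - 1 - 1 = i - 2 from by omega]; exact ha1) hb2
    rw [show i - 1 - 1 = i - 2 from by omega, ha2] at this
    exact this
  have e3 : D i (j - 1) = D (i - 1) (j - 2) + (a i - b j) ^ 2 := by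
    have := dtw_diag a b m n D hD i (j - 1) (by omega) him (by omega) (by omega)
      ha2 (by rw [show j - 1 - 1 = j - 2 from by omega]; exact hb1)
    rw [show j - 1 - 1 = j - 2 from by omega, hb2] at this
    exact this
  constructor <;> linarith
end

section
/- For every 2 ≤ i ≤ m and 2 ≤ j ≤ n: if i < j then min{D[i−1,j], D[i,j−1], D[i−1,j−1]} = D[i,j−1]; if i > j then min{D[i−1,j], D[i,j−1], D[i−1,j−1]} = D[i−1,j]; and if i = j then min{D[i−1,j], D[i,j−1], D[i−1,j−1]} = D[i−1,j−1]. -/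
namespace DTWAux

variable {a b : ℕ → ℝ} {m n : ℕ}

lemma a_anti (hA : ∀ i, 1 ≤ i → i < m → a (i + 1) ≤ a i) :
    ∀ i i', 1 ≤ i → i ≤ i' → i' ≤ m → a i' ≤ a i := by
  intro i i' h1 h2 h3
  induction i' with
  | zero => omega
  | succ k ih =>
    rcases Nat.lt_or_ge i (k + 1) with h | h
    · have hk : i ≤ k := by omega
      have h5 := ih hk (by omega)
      have h6 := hA k (by omega) (by omega)
      linarith
    · have : i = k + 1 := by omega
      subst this; exact le_rfl

lemma b_mono (hB : ∀ j, 1 ≤ j → j < n → b j ≤ b (j + 1)) :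
    ∀ j j', 1 ≤ j → j ≤ j' → j' ≤ n → b j ≤ b j' := by
  intro j j' h1 h2 h3
  induction j' with
  | zero => omega
  | succ k ih =>
    rcases Nat.lt_or_ge j (k + 1) with h | h
    · have hk : j ≤ k := by omega
      have h5 := ih hk (by omega)
      have h6 := hB k (by omega) (by omega)
      linarith
    · have : j = k + 1 := by omega
      subst this; exact le_rfl

/-- Key monotonicity: above the diagonal, D decreases in i and increases in j. -/
lemma key (D : ℕ → ℕ → ℝ) (hD : DTWTable a b m n D)
    (hab : ∀ i j, 1 ≤ i → i ≤ m → 1 ≤ j → j ≤ n → b j < a i)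
    (ha : ∀ i i', 1 ≤ i → i ≤ i' → i' ≤ m → a i' ≤ a i) :
    ∀ N i j, i + j ≤ N →
      ((1 ≤ i → i + 1 ≤ m → i + 1 ≤ j → j ≤ n → D (i + 1) j ≤ D i j) ∧
       (1 ≤ i → i ≤ m → i ≤ j → j + 1 ≤ n → D i j ≤ D i (j + 1))) := by
  obtain ⟨h11, hcol, hrow, hrec⟩ := hD
  intro N
  induction N with
  | zero => intro i j h; constructor <;> intros <;> omega
  | succ N ih =>
    intro i j hij
    constructor
    · -- Part A : D (i+1) j ≤ D i j  when 1 ≤ i, i+1 ≤ m, i+1 ≤ j ≤ n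
      intro h1 h2 h3 h4
      have hrecIJ := hrec (i + 1) j (by omega) h2 (by omega) h4
      simp only [Nat.add_sub_cancel] at hrecIJ
      have hmin : min (min (D (i + 1) (j - 1)) (D i j)) (D i (j - 1)) ≤ D i (j - 1) :=
        min_le_right _ _
      have h6 := hab (i + 1) j (by omega) h2 (by omega) h4
      have h5 := ha i (i + 1) h1 (by omega) h2
      have hc : (a (i + 1) - b j) ^ 2 ≤ (a i - b j) ^ 2 :=
        pow_le_pow_left₀ (by linarith) (by linarith) 2
      have hbound : D (i + 1) j ≤ D i (j - 1) + (a i - b j) ^ 2 := by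
        rw [hrecIJ]; linarith
      by_cases hi : i = 1
      · subst hi
        have hr := hrow j (by omega) h4
        linarith
      · have hi2 : 2 ≤ i := by omega
        have hrecI := hrec i j (by omega) (by omega) (by omega) h4
        have e1 : i - 1 + 1 = i := by omega
        have e2 : j - 1 + 1 = j := by omega
        have IH1 := (ih (i - 1) (j - 1) (by omega)).1 (by omega) (by omega) (by omega) (by omega)
        rw [e1] at IH1
        have IH2 := (ih (i - 1) (j - 1) (by omega)).2 (by omega) (by omega) (by omega) (by omega)
        rw [e2] at IH2
        have hm2 : D i (j - 1) ≤ min (min (D i (j - 1)) (D (i - 1) j)) (D (i - 1) (j - 1)) :=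
          le_min (le_min le_rfl (by linarith)) IH1
        rw [hrecI]; linarith
    · -- Part B : D i j ≤ D i (j+1)  when 1 ≤ i ≤ m, i ≤ j, j+1 ≤ n
      intro h1 h2 h3 h4
      have hc0 : (0 : ℝ) ≤ (a i - b (j + 1)) ^ 2 := sq_nonneg _
      by_cases hi : i = 1
      · subst hi
        have hr := hrow (j + 1) (by omega) h4
        simp only [Nat.add_sub_cancel] at hr
        linarith
      · have hi2 : 2 ≤ i := by omega
        have hrecI := hrec i (j + 1) (by omega) h2 (by omega) h4
        simp only [Nat.add_sub_cancel] at hrecI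
        have e1 : i - 1 + 1 = i := by omega
        have IH1 := (ih (i - 1) j (by omega)).1 (by omega) (by omega) (by omega) (by omega)
        rw [e1] at IH1
        have IH2 := (ih (i - 1) j (by omega)).2 (by omega) (by omega) (by omega) h4
        have hm2 : D i j ≤ min (min (D i j) (D (i - 1) (j + 1))) (D (i - 1) j) :=
          le_min (le_min le_rfl (by linarith)) IH1
        rw [hrecI]; linarith

/-- Mirror monotonicity: below the diagonal, D decreases in j and increases in i. -/
lemma key' (D : ℕ → ℕ → ℝ) (hD : DTWTable a b m n D)
    (hab : ∀ i j, 1 ≤ i → i ≤ m → 1 ≤ j → j ≤ n → b j < a i)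
    (hb : ∀ j j', 1 ≤ j → j ≤ j' → j' ≤ n → b j ≤ b j') :
    ∀ N i j, i + j ≤ N →
      ((1 ≤ j → j + 1 ≤ n → j + 1 ≤ i → i ≤ m → D i (j + 1) ≤ D i j) ∧
       (1 ≤ j → j ≤ n → j ≤ i → i + 1 ≤ m → D i j ≤ D (i + 1) j)) := by
  obtain ⟨h11, hcol, hrow, hrec⟩ := hD
  intro N
  induction N with
  | zero => intro i j h; constructor <;> intros <;> omega
  | succ N ih =>
    intro i j hij
    constructor
    · -- Part A' : D i (j+1) ≤ D i j  when 1 ≤ j, j+1 ≤ n, j+1 ≤ i ≤ m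
      intro h1 h2 h3 h4
      have hrecIJ := hrec i (j + 1) (by omega) h4 (by omega) h2
      simp only [Nat.add_sub_cancel] at hrecIJ
      have hmin : min (min (D i j) (D (i - 1) (j + 1))) (D (i - 1) j) ≤ D (i - 1) j :=
        min_le_right _ _
      have h6 := hab i (j + 1) (by omega) h4 (by omega) h2
      have h5 := hb j (j + 1) h1 (by omega) h2
      have hc : (a i - b (j + 1)) ^ 2 ≤ (a i - b j) ^ 2 :=
        pow_le_pow_left₀ (by linarith) (by linarith) 2
      have hbound : D i (j + 1) ≤ D (i - 1) j + (a i - b j) ^ 2 := by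
        rw [hrecIJ]; linarith
      by_cases hj : j = 1
      · subst hj
        have hr := hcol i (by omega) h4
        linarith
      · have hj2 : 2 ≤ j := by omega
        have hrecI := hrec i j (by omega) h4 (by omega) (by omega)
        have e1 : i - 1 + 1 = i := by omega
        have e2 : j - 1 + 1 = j := by omega
        have IH1 := (ih (i - 1) (j - 1) (by omega)).1 (by omega) (by omega) (by omega) (by omega)
        rw [e2] at IH1
        have IH2 := (ih (i - 1) (j - 1) (by omega)).2 (by omega) (by omega) (by omega) (by omega)
        rw [e1] at IH2
        have hm2 : D (i - 1) j ≤ min (min (D i (j - 1)) (D (i - 1) j)) (D (i - 1) (j - 1)) :=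
          le_min (le_min (by linarith) le_rfl) IH1
        rw [hrecI]; linarith
    · -- Part B' : D i j ≤ D (i+1) j  when 1 ≤ j ≤ n, j ≤ i, i+1 ≤ m
      intro h1 h2 h3 h4
      have hc0 : (0 : ℝ) ≤ (a (i + 1) - b j) ^ 2 := sq_nonneg _
      by_cases hj : j = 1
      · subst hj
        have hr := hcol (i + 1) (by omega) h4
        simp only [Nat.add_sub_cancel] at hr
        linarith
      · have hj2 : 2 ≤ j := by omega
        have hrecI := hrec (i + 1) j (by omega) h4 (by omega) h2
        simp only [Nat.add_sub_cancel] at hrecI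
        have e2 : j - 1 + 1 = j := by omega
        have IH1 := (ih i (j - 1) (by omega)).1 (by omega) (by omega) (by omega) (by omega)
        rw [e2] at IH1
        have IH2 := (ih i (j - 1) (by omega)).2 (by omega) (by omega) (by omega) h4
        have hm2 : D i j ≤ min (min (D (i + 1) (j - 1)) (D i j)) (D i (j - 1)) :=
          le_min (le_min (by linarith) le_rfl) IH1
        rw [hrecI]; linarith

end DTWAux

theorem stmt_7 (a b : ℕ → ℝ) (m n : ℕ) (hm : 1 ≤ m) (hn : 1 ≤ n)
    (D : ℕ → ℕ → ℝ) (hD : DTWTable a b m n D)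
    (hA : ∀ i, 1 ≤ i → i < m → a (i + 1) ≤ a i)
    (hB : ∀ j, 1 ≤ j → j < n → b j ≤ b (j + 1))
    (hAB : b n < a m) :
    ∀ i j, 2 ≤ i → i ≤ m → 2 ≤ j → j ≤ n →
      (i < j → min (min (D (i - 1) j) (D i (j - 1))) (D (i - 1) (j - 1)) = D i (j - 1)) ∧
      (j < i → min (min (D (i - 1) j) (D i (j - 1))) (D (i - 1) (j - 1)) = D (i - 1) j) ∧
      (i = j → min (min (D (i - 1) j) (D i (j - 1))) (D (i - 1) (j - 1)) = D (i - 1) (j - 1)) := by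
  have ha := DTWAux.a_anti hA
  have hb := DTWAux.b_mono hB
  have hab : ∀ i j, 1 ≤ i → i ≤ m → 1 ≤ j → j ≤ n → b j < a i := by
    intro i j h1 h2 h3 h4
    have := ha i m h1 h2 le_rfl
    have := hb j n h3 h4 le_rfl
    linarith
  have K := DTWAux.key D hD hab ha
  have K' := DTWAux.key' D hD hab hb
  intro i j h2i him h2j hjn
  have e1 : i - 1 + 1 = i := by omega
  have e2 : j - 1 + 1 = j := by omega
  refine ⟨?_, ?_, ?_⟩
  · intro hij
    -- need  D i (j-1) ≤ D (i-1) j  and  D i (j-1) ≤ D (i-1) (j-1)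
    have hYZ := (K (i + j) (i - 1) (j - 1) (by omega)).1 (by omega) (by omega) (by omega) (by omega)
    rw [e1] at hYZ
    have hZX := (K (i + j) (i - 1) (j - 1) (by omega)).2 (by omega) (by omega) (by omega) (by omega)
    rw [e2] at hZX
    rw [min_eq_right (by linarith : D i (j - 1) ≤ D (i - 1) j),
        min_eq_left hYZ]
  · intro hji
    -- need  D (i-1) j ≤ D i (j-1)  and  D (i-1) j ≤ D (i-1) (j-1)
    have hXZ := (K' (i + j) (i - 1) (j - 1) (by omega)).1 (by omega) (by omega) (by omega) (by omega)
    rw [e2] at hXZ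
    have hZY := (K' (i + j) (i - 1) (j - 1) (by omega)).2 (by omega) (by omega) (by omega) (by omega)
    rw [e1] at hZY
    rw [min_eq_left (by linarith : D (i - 1) j ≤ D i (j - 1)),
        min_eq_left hXZ]
  · intro hij
    -- need  D (i-1) (j-1) ≤ D (i-1) j  and  D (i-1) (j-1) ≤ D i (j-1)
    have hZX := (K (i + j) (i - 1) (j - 1) (by omega)).2 (by omega) (by omega) (by omega) (by omega)
    rw [e2] at hZX
    have hZY := (K' (i + j) (i - 1) (j - 1) (by omega)).2 (by omega) (by omega) (by omega) (by omega)
    rw [e1] at hZY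
    rw [min_eq_right (le_min hZX hZY)]
end

section
/- For every 2 ≤ i ≤ m and 2 ≤ j ≤ n: if i < j then D[i,j] = D[i,j−1] + (a_i − b_j)^2; if i > j then D[i,j] = D[i−1,j] + (a_i − b_j)^2; and if i = j then D[i,j] = D[i−1,j−1] + (a_i − b_j)^2. -/
noncomputable def dtwG (c : ℕ → ℕ → ℝ) (i j : ℕ) : ℝ :=
  (∑ t ∈ Finset.Icc 1 (min i j), c t t) +
  (∑ s ∈ Finset.Icc (i + 1) j, c i s) +
  (∑ r ∈ Finset.Icc (j + 1) i, c r j)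

lemma dtwG_swap (c : ℕ → ℕ → ℝ) (i j : ℕ) :
    dtwG (fun x y => c y x) j i = dtwG c i j := by
  simp only [dtwG, min_comm j i]
  ring

lemma dtwG_one (c : ℕ → ℕ → ℝ) : dtwG c 1 1 = c 1 1 := by
  simp [dtwG]

lemma dtwG_step (c : ℕ → ℕ → ℝ) {i k : ℕ} (hik : i ≤ k) :
    dtwG c i (k + 1) = dtwG c i k + c i (k + 1) := by
  have h1 : min i (k + 1) = i := min_eq_left (by omega)
  have h2 : min i k = i := min_eq_left hik
  have h3 : Finset.Icc (k + 2) i = ∅ := Finset.Icc_eq_empty (by omega)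
  have h4 : Finset.Icc (k + 1) i = ∅ := Finset.Icc_eq_empty (by omega)
  simp only [dtwG, h1, h2, h3, h4, Finset.sum_empty,
    Finset.sum_Icc_succ_top (by omega : i + 1 ≤ k + 1)]
  ring

lemma dtwG_stepu (c : ℕ → ℕ → ℝ) {j k : ℕ} (hjk : j ≤ k) :
    dtwG c (k + 1) j = dtwG c k j + c (k + 1) j := by
  rw [← dtwG_swap c, ← dtwG_swap c k j, dtwG_step _ hjk]

lemma dtwG_diag (c : ℕ → ℕ → ℝ) (k : ℕ) :
    dtwG c (k + 1) (k + 1) = dtwG c k k + c (k + 1) (k + 1) := by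
  have h3 : Finset.Icc (k + 2) (k + 1) = ∅ := Finset.Icc_eq_empty (by omega)
  have h4 : Finset.Icc (k + 1) k = ∅ := Finset.Icc_eq_empty (by omega)
  simp only [dtwG, min_self, h3, h4, Finset.sum_empty,
    Finset.sum_Icc_succ_top (by omega : 1 ≤ k + 1)]
  ring

lemma dtwG_mono (c : ℕ → ℕ → ℝ) {k j : ℕ} (h1 : 1 ≤ k) (hkj : k + 1 ≤ j)
    (hc : ∀ s, k + 1 ≤ s → s ≤ j → c (k + 1) s ≤ c k s) :
    dtwG c (k + 1) j ≤ dtwG c k j := by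
  have h1' : min (k + 1) j = k + 1 := min_eq_left hkj
  have h2' : min k j = k := min_eq_left (by omega)
  have h3 : Finset.Icc (j + 1) (k + 1) = ∅ := Finset.Icc_eq_empty (by omega)
  have h4 : Finset.Icc (j + 1) k = ∅ := Finset.Icc_eq_empty (by omega)
  have hsplit : ∀ g : ℕ → ℝ, ∑ s ∈ Finset.Icc (k + 1) j, g s
      = g (k + 1) + ∑ s ∈ Finset.Icc (k + 2) j, g s := by
    intro g
    rw [Finset.Icc_eq_cons_Ioc hkj, Finset.sum_cons, ← Finset.Icc_add_one_left_eq_Ioc]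
    rfl
  have key : (∑ t ∈ Finset.Icc 1 (k + 1), c t t) + ∑ s ∈ Finset.Icc (k + 2) j, c (k + 1) s
      ≤ (∑ t ∈ Finset.Icc 1 k, c t t) + ∑ s ∈ Finset.Icc (k + 1) j, c k s := by
    rw [Finset.sum_Icc_succ_top (by omega : 1 ≤ k + 1), hsplit (fun s => c k s), add_assoc]
    refine add_le_add_right (add_le_add (hc (k + 1) le_rfl hkj) ?_) _
    exact Finset.sum_le_sum fun s hs => by
      simp only [Finset.mem_Icc] at hs; exact hc s (by omega) hs.2
  simp only [dtwG, h1', h2', h3, h4, Finset.sum_empty, add_zero]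
  exact key

lemma dtwG_monou (c : ℕ → ℕ → ℝ) {i k : ℕ} (h1 : 1 ≤ k) (hki : k + 1 ≤ i)
    (hc : ∀ r, k + 1 ≤ r → r ≤ i → c r (k + 1) ≤ c r k) :
    dtwG c i (k + 1) ≤ dtwG c i k := by
  rw [← dtwG_swap c i (k+1), ← dtwG_swap c i k]
  exact dtwG_mono _ h1 hki hc

lemma dtw_closed (a b : ℕ → ℝ) (m n : ℕ) (hm : 1 ≤ m) (hn : 1 ≤ n)
    (D : ℕ → ℕ → ℝ) (hD : DTWTable a b m n D)
    (hA : ∀ i, 1 ≤ i → i < m → a (i + 1) ≤ a i)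
    (hB : ∀ j, 1 ≤ j → j < n → b j ≤ b (j + 1))
    (hAB : b n < a m) :
    ∀ i j, 1 ≤ i → i ≤ m → 1 ≤ j → j ≤ n →
      D i j = dtwG (fun x y => (a x - b y) ^ 2) i j := by
  set c : ℕ → ℕ → ℝ := fun x y => (a x - b y) ^ 2 with hc
  -- monotonicity of a and b over ranges
  have ha' : ∀ i i', 1 ≤ i → i ≤ i' → i' ≤ m → a i' ≤ a i := by
    intro i i' h1 h2 h3
    induction i' with
    | zero => omega
    | succ k ih =>
      rcases Nat.lt_or_ge i (k + 1) with h | h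
      · exact le_trans (hA k (by omega) (by omega)) (ih (by omega) (by omega))
      · have : i = k + 1 := by omega
        rw [this]
  have hb' : ∀ j j', 1 ≤ j → j ≤ j' → j' ≤ n → b j ≤ b j' := by
    intro j j' h1 h2 h3
    induction j' with
    | zero => omega
    | succ k ih =>
      rcases Nat.lt_or_ge j (k + 1) with h | h
      · exact le_trans (ih (by omega) (by omega)) (hB k (by omega) (by omega))
      · have : j = k + 1 := by omega
        rw [this]
  have hpos : ∀ i j, 1 ≤ i → i ≤ m → 1 ≤ j → j ≤ n → b j ≤ a i := by
    intro i j h1 h2 h3 h4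
    calc b j ≤ b n := hb' j n h3 h4 le_rfl
    _ ≤ a m := le_of_lt hAB
    _ ≤ a i := ha' i m h1 h2 le_rfl
  -- cost monotonicity
  have hcrow : ∀ k s, 1 ≤ k → k + 1 ≤ m → 1 ≤ s → s ≤ n → c (k + 1) s ≤ c k s := by
    intro k s h1 h2 h3 h4
    exact pow_le_pow_left₀ (sub_nonneg.2 (hpos (k + 1) s (by omega) h2 h3 h4))
      (sub_le_sub_right (hA k h1 (by omega)) _) 2
  have hccol : ∀ k r, 1 ≤ k → k + 1 ≤ n → 1 ≤ r → r ≤ m → c r (k + 1) ≤ c r k := by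
    intro k r h1 h2 h3 h4
    exact pow_le_pow_left₀ (sub_nonneg.2 (hpos r (k + 1) h3 h4 (by omega) h2))
      (sub_le_sub_left (hB k h1 (by omega)) _) 2
  have hcnn : ∀ x y, (0 : ℝ) ≤ c x y := fun x y => sq_nonneg _
  obtain ⟨hD1, hDi, hDj, hDij⟩ := hD
  -- strong induction on i + j
  suffices H : ∀ N i j, i + j ≤ N → 1 ≤ i → i ≤ m → 1 ≤ j → j ≤ n → D i j = dtwG c i j by
    intro i j h1 h2 h3 h4; exact H (i + j) i j le_rfl h1 h2 h3 h4
  intro N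
  induction N with
  | zero => intro i j h; omega
  | succ N ih =>
    intro i j hN h1i him h1j hjn
    rcases Nat.lt_or_ge i 2 with hi1 | hi2
    · have hi : i = 1 := by omega
      subst hi
      rcases Nat.lt_or_ge j 2 with hj1 | hj2
      · have hj : j = 1 := by omega
        subst hj
        rw [hD1, dtwG_one]
      · obtain ⟨k, rfl⟩ : ∃ k, j = k + 1 := ⟨j - 1, by omega⟩
        have hrec := hDj (k + 1) (by omega) hjn
        simp only [Nat.add_sub_cancel] at hrec
        rw [hrec, ih 1 k (by omega) le_rfl him (by omega) (by omega),
          dtwG_step c (by omega : 1 ≤ k)]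
    · obtain ⟨p, rfl⟩ : ∃ p, i = p + 1 := ⟨i - 1, by omega⟩
      rcases Nat.lt_or_ge j 2 with hj1 | hj2
      · have hj : j = 1 := by omega
        subst hj
        have hrec := hDi (p + 1) (by omega) him
        simp only [Nat.add_sub_cancel] at hrec
        rw [hrec, ih p 1 (by omega) (by omega) (by omega) le_rfl hn,
          dtwG_stepu c (by omega : 1 ≤ p)]
      · obtain ⟨q, rfl⟩ : ∃ q, j = q + 1 := ⟨j - 1, by omega⟩
        have hrec := hDij (p + 1) (q + 1) (by omega) him (by omega) hjn
        simp only [Nat.add_sub_cancel] at hrec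
        have e1 : D (p + 1) q = dtwG c (p + 1) q :=
          ih (p + 1) q (by omega) (by omega) him (by omega) (by omega)
        have e2 : D p (q + 1) = dtwG c p (q + 1) :=
          ih p (q + 1) (by omega) (by omega) (by omega) (by omega) hjn
        have e3 : D p q = dtwG c p q :=
          ih p q (by omega) (by omega) (by omega) (by omega) (by omega)
        rw [hrec, e1, e2, e3]
        rcases lt_trichotomy (p + 1) (q + 1) with hlt | heq | hgt
        · -- i < j : min is dtwG c (p+1) q
          have hpq : p + 1 ≤ q := by omega
          have hXZ : dtwG c (p + 1) q ≤ dtwG c p q :=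
            dtwG_mono c (by omega) hpq fun s hs1 hs2 =>
              hcrow p s (by omega) him (by omega) (by omega)
          have hZY : dtwG c p q ≤ dtwG c p (q + 1) := by
            rw [dtwG_step c (by omega : p ≤ q)]
            exact le_add_of_nonneg_right (hcnn _ _)
          rw [min_eq_left (hXZ.trans hZY), min_eq_left hXZ,
            dtwG_step c hpq]
        · -- diagonal
          have hpq : p = q := by omega
          subst hpq
          have hX : dtwG c p p ≤ dtwG c (p + 1) p := by
            rw [dtwG_stepu c (le_refl p)]
            exact le_add_of_nonneg_right (hcnn _ _)
          have hY : dtwG c p p ≤ dtwG c p (p + 1) := by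
            rw [dtwG_step c (le_refl p)]
            exact le_add_of_nonneg_right (hcnn _ _)
          rw [min_eq_right (le_min hX hY), dtwG_diag]
        · -- j < i : min is dtwG c p (q+1)
          have hqp : q + 1 ≤ p := by omega
          have hYZ : dtwG c p (q + 1) ≤ dtwG c p q :=
            dtwG_monou c (by omega) hqp fun r hr1 hr2 =>
              hccol q r (by omega) hjn (by omega) (by omega)
          have hZX : dtwG c p q ≤ dtwG c (p + 1) q := by
            rw [dtwG_stepu c (by omega : q ≤ p)]
            exact le_add_of_nonneg_right (hcnn _ _)
          rw [min_eq_right (hYZ.trans hZX), min_eq_left hYZ,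
            dtwG_stepu c hqp]

theorem stmt_8 (a b : ℕ → ℝ) (m n : ℕ) (hm : 1 ≤ m) (hn : 1 ≤ n)
    (D : ℕ → ℕ → ℝ) (hD : DTWTable a b m n D)
    (hA : ∀ i, 1 ≤ i → i < m → a (i + 1) ≤ a i)
    (hB : ∀ j, 1 ≤ j → j < n → b j ≤ b (j + 1))
    (hAB : b n < a m) :
    ∀ i j, 2 ≤ i → i ≤ m → 2 ≤ j → j ≤ n →
      (i < j → D i j = D i (j - 1) + (a i - b j) ^ 2) ∧
      (j < i → D i j = D (i - 1) j + (a i - b j) ^ 2) ∧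
      (i = j → D i j = D (i - 1) (j - 1) + (a i - b j) ^ 2) := by
  have hcl := dtw_closed a b m n hm hn D hD hA hB hAB
  intro i j h2i him h2j hjn
  obtain ⟨p, rfl⟩ : ∃ p, i = p + 1 := ⟨i - 1, by omega⟩
  obtain ⟨q, rfl⟩ : ∃ q, j = q + 1 := ⟨j - 1, by omega⟩
  simp only [Nat.add_sub_cancel]
  refine ⟨fun hlt => ?_, fun hgt => ?_, fun heq => ?_⟩
  · rw [hcl (p + 1) (q + 1) (by omega) him (by omega) hjn,
      hcl (p + 1) q (by omega) him (by omega) (by omega),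
      dtwG_step _ (by omega : p + 1 ≤ q)]
  · rw [hcl (p + 1) (q + 1) (by omega) him (by omega) hjn,
      hcl p (q + 1) (by omega) (by omega) (by omega) hjn,
      dtwG_stepu _ (by omega : q + 1 ≤ p)]
  · have : p = q := by omega
    subst this
    rw [hcl (p + 1) (p + 1) (by omega) him (by omega) hjn,
      hcl p p (by omega) (by omega) (by omega) (by omega),
      dtwG_diag]
end

section
/- For all 1 ≤ i ≤ m and 1 ≤ j ≤ n with i ≤ j, one has D[i,j] = Σ_{i′=1}^{i} (a_{i′} − b_{i′})^2 + Σ_{j′=i+1}^{j} (a_i − b_{j′})^2. -/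
/-- Closed form for the DTW table on the whole rectangle. -/
noncomputable def dtwF (a b : ℕ → ℝ) (i j : ℕ) : ℝ :=
  (∑ k ∈ Finset.Icc 1 (min i j), (a k - b k) ^ 2) +
    (∑ x ∈ Finset.Icc (i + 1) j, (a i - b x) ^ 2) +
    (∑ x ∈ Finset.Icc (j + 1) i, (a x - b j) ^ 2)

lemma sum_Icc_bot {M : Type*} [AddCommMonoid M] {c d : ℕ} (h : c ≤ d) (f : ℕ → M) :
    ∑ k ∈ Finset.Icc c d, f k = f c + ∑ k ∈ Finset.Icc (c + 1) d, f k := by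
  rw [Finset.Icc_eq_cons_Ioc h, Finset.sum_cons, Finset.Icc_add_one_left_eq_Ioc]

lemma dtwF_upper (a b : ℕ → ℝ) {i j : ℕ} (h : i ≤ j) :
    dtwF a b i j = (∑ k ∈ Finset.Icc 1 i, (a k - b k) ^ 2) +
      ∑ x ∈ Finset.Icc (i + 1) j, (a i - b x) ^ 2 := by
  unfold dtwF
  rw [min_eq_left h, Finset.Icc_eq_empty (by omega : ¬ j + 1 ≤ i), Finset.sum_empty, add_zero]

lemma dtwF_lower (a b : ℕ → ℝ) {i j : ℕ} (h : j ≤ i) :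
    dtwF a b i j = (∑ k ∈ Finset.Icc 1 j, (a k - b k) ^ 2) +
      ∑ x ∈ Finset.Icc (j + 1) i, (a x - b j) ^ 2 := by
  unfold dtwF
  rw [min_eq_right h, Finset.Icc_eq_empty (by omega : ¬ i + 1 ≤ j), Finset.sum_empty, add_zero]

lemma dtwF_diag (a b : ℕ → ℝ) (k : ℕ) :
    dtwF a b k k = ∑ x ∈ Finset.Icc 1 k, (a x - b x) ^ 2 := by
  rw [dtwF_upper a b le_rfl, Finset.Icc_eq_empty (by omega : ¬ k + 1 ≤ k), Finset.sum_empty,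
    add_zero]

lemma dtwF_right (a b : ℕ → ℝ) {i j : ℕ} (h : i ≤ j) :
    dtwF a b i (j + 1) = dtwF a b i j + (a i - b (j + 1)) ^ 2 := by
  rw [dtwF_upper a b (by omega), dtwF_upper a b h,
    Finset.sum_Icc_succ_top (by omega : i + 1 ≤ j + 1), add_assoc]

lemma dtwF_down (a b : ℕ → ℝ) {i j : ℕ} (h : j ≤ i) :
    dtwF a b (i + 1) j = dtwF a b i j + (a (i + 1) - b j) ^ 2 := by
  rw [dtwF_lower a b (by omega), dtwF_lower a b h,
    Finset.sum_Icc_succ_top (by omega : j + 1 ≤ i + 1), add_assoc]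

/-- Moving down in the strict upper triangle does not increase `F`. -/
lemma dtwF_step_down_le (a b : ℕ → ℝ) {p q : ℕ} (hpq : p + 1 ≤ q)
    (hmono : a (p + 1) ≤ a p)
    (hpos : ∀ x, p + 1 ≤ x → x ≤ q → b x ≤ a (p + 1)) :
    dtwF a b (p + 1) q ≤ dtwF a b p q := by
  rw [dtwF_upper a b hpq, dtwF_upper a b (by omega : p ≤ q),
    Finset.sum_Icc_succ_top (by omega : 1 ≤ p + 1),
    sum_Icc_bot (by omega : p + 1 ≤ q) (fun x => (a p - b x) ^ 2)]
  have h1 : ∀ x ∈ Finset.Icc (p + 1 + 1) q, (a (p + 1) - b x) ^ 2 ≤ (a p - b x) ^ 2 := by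
    intro x hx
    simp only [Finset.mem_Icc] at hx
    have h0 : 0 ≤ a (p + 1) - b x := by
      have := hpos x (by omega) (by omega); linarith
    exact pow_le_pow_left₀ h0 (by linarith) 2
  have h2 : (a (p + 1) - b (p + 1)) ^ 2 ≤ (a p - b (p + 1)) ^ 2 := by
    have h0 : 0 ≤ a (p + 1) - b (p + 1) := by
      have := hpos (p + 1) le_rfl (by omega); linarith
    exact pow_le_pow_left₀ h0 (by linarith) 2
  have h3 := Finset.sum_le_sum h1
  linarith

/-- Moving right in the strict lower triangle does not increase `F`. -/
lemma dtwF_step_right_le (a b : ℕ → ℝ) {p q : ℕ} (hpq : q + 1 ≤ p)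
    (hmono : b q ≤ b (q + 1))
    (hpos : ∀ x, q + 1 ≤ x → x ≤ p → b (q + 1) ≤ a x) :
    dtwF a b p (q + 1) ≤ dtwF a b p q := by
  rw [dtwF_lower a b hpq, dtwF_lower a b (by omega : q ≤ p),
    Finset.sum_Icc_succ_top (by omega : 1 ≤ q + 1),
    sum_Icc_bot (by omega : q + 1 ≤ p) (fun x => (a x - b q) ^ 2)]
  have h1 : ∀ x ∈ Finset.Icc (q + 1 + 1) p, (a x - b (q + 1)) ^ 2 ≤ (a x - b q) ^ 2 := by
    intro x hx
    simp only [Finset.mem_Icc] at hx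
    have h0 : 0 ≤ a x - b (q + 1) := by
      have := hpos x (by omega) (by omega); linarith
    exact pow_le_pow_left₀ h0 (by linarith) 2
  have h2 : (a (q + 1) - b (q + 1)) ^ 2 ≤ (a (q + 1) - b q) ^ 2 := by
    have h0 : 0 ≤ a (q + 1) - b (q + 1) := by
      have := hpos (q + 1) le_rfl (by omega); linarith
    exact pow_le_pow_left₀ h0 (by linarith) 2
  have h3 := Finset.sum_le_sum h1
  linarith

theorem stmt_9 (a b : ℕ → ℝ) (m n : ℕ) (hm : 1 ≤ m) (hn : 1 ≤ n)
    (D : ℕ → ℕ → ℝ) (hD : DTWTable a b m n D)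
    (hA : ∀ i, 1 ≤ i → i < m → a (i + 1) ≤ a i)
    (hB : ∀ j, 1 ≤ j → j < n → b j ≤ b (j + 1))
    (hAB : b n < a m) :
    ∀ i j, 1 ≤ i → i ≤ m → 1 ≤ j → j ≤ n → i ≤ j →
      D i j = (∑ i' ∈ Finset.Icc 1 i, (a i' - b i') ^ 2) +
        ∑ j' ∈ Finset.Icc (i + 1) j, (a i - b j') ^ 2 := by
  obtain ⟨h11, hcol, hrow, hrec⟩ := hD
  -- global monotonicity on the range
  have hA' : ∀ p q, 1 ≤ p → p ≤ q → q ≤ m → a q ≤ a p := by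
    intro p q hp hpq
    induction q, hpq using Nat.le_induction with
    | base => intro _; exact le_rfl
    | succ q hq ih =>
      intro hqm
      exact le_trans (hA q (by omega) (by omega)) (ih (by omega))
  have hB' : ∀ p q, 1 ≤ p → p ≤ q → q ≤ n → b p ≤ b q := by
    intro p q hp hpq
    induction q, hpq using Nat.le_induction with
    | base => intro _; exact le_rfl
    | succ q hq ih =>
      intro hqn
      exact le_trans (ih (by omega)) (hB q (by omega) (by omega))
  have hpos : ∀ i j, 1 ≤ i → i ≤ m → 1 ≤ j → j ≤ n → b j ≤ a i := by
    intro i j hi him hj hjn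
    calc b j ≤ b n := hB' j n hj hjn le_rfl
    _ ≤ a m := le_of_lt hAB
    _ ≤ a i := hA' i m hi him le_rfl
  -- main claim on the full rectangle
  have key : ∀ s i j, i + j = s → 1 ≤ i → i ≤ m → 1 ≤ j → j ≤ n →
      D i j = dtwF a b i j := by
    intro s
    induction s using Nat.strong_induction_on with
    | _ s ih =>
      intro i j hs hi him hj hjn
      rcases Nat.lt_or_ge 1 i with hi1 | hi1
      · rcases Nat.lt_or_ge 1 j with hj1 | hj1
        · -- i > 1, j > 1
          obtain ⟨p, rfl⟩ : ∃ p, i = p + 1 := ⟨i - 1, by omega⟩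
          obtain ⟨q, rfl⟩ : ∃ q, j = q + 1 := ⟨j - 1, by omega⟩
          have hrec' := hrec (p + 1) (q + 1) hi1 him hj1 hjn
          simp only [Nat.add_sub_cancel] at hrec'
          have e1 : D (p + 1) q = dtwF a b (p + 1) q :=
            ih (p + 1 + q) (by omega) _ _ rfl (by omega) him (by omega) (by omega)
          have e2 : D p (q + 1) = dtwF a b p (q + 1) :=
            ih (p + (q + 1)) (by omega) _ _ rfl (by omega) (by omega) (by omega) hjn
          have e3 : D p q = dtwF a b p q :=
            ih (p + q) (by omega) _ _ rfl (by omega) (by omega) (by omega) (by omega)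
          rw [e1, e2, e3] at hrec'
          rcases lt_trichotomy p q with hpq | hpq | hpq
          · -- strict upper triangle : min is F (p+1) q
            have c1 : dtwF a b (p + 1) q ≤ dtwF a b p q :=
              dtwF_step_down_le a b hpq (hA p (by omega) (by omega))
                (fun x hx1 hx2 => hpos (p + 1) x (by omega) him (by omega) (by omega))
            have c2 : dtwF a b p q ≤ dtwF a b p (q + 1) := by
              rw [dtwF_right a b (by omega : p ≤ q)]
              nlinarith [sq_nonneg (a p - b (q + 1))]
            rw [hrec', min_eq_left (le_trans c1 c2), min_eq_left c1,
              ← dtwF_right a b hpq]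
          · -- diagonal : min is F p q
            subst hpq
            have c1 : dtwF a b p p ≤ dtwF a b (p + 1) p := by
              rw [dtwF_down a b le_rfl]
              nlinarith [sq_nonneg (a (p + 1) - b p)]
            have c2 : dtwF a b p p ≤ dtwF a b p (p + 1) := by
              rw [dtwF_right a b le_rfl]
              nlinarith [sq_nonneg (a p - b (p + 1))]
            have hmin : min (min (dtwF a b (p + 1) p) (dtwF a b p (p + 1)))
                (dtwF a b p p) = dtwF a b p p :=
              min_eq_right (le_min c1 c2)
            rw [hrec', hmin, dtwF_diag, dtwF_diag,
              Finset.sum_Icc_succ_top (by omega : 1 ≤ p + 1)]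
          · -- strict lower triangle : min is F p (q+1)
            have c1 : dtwF a b p (q + 1) ≤ dtwF a b p q :=
              dtwF_step_right_le a b hpq (hB q (by omega) (by omega))
                (fun x hx1 hx2 => hpos x (q + 1) (by omega) (by omega) (by omega) hjn)
            have c2 : dtwF a b p q ≤ dtwF a b (p + 1) q := by
              rw [dtwF_down a b (by omega : q ≤ p)]
              nlinarith [sq_nonneg (a (p + 1) - b q)]
            rw [hrec', min_eq_right (le_trans c1 c2), min_eq_left c1,
              ← dtwF_down a b hpq]
        · -- j = 1
          have hj1' : j = 1 := by omega
          subst hj1'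
          obtain ⟨p, rfl⟩ : ∃ p, i = p + 1 := ⟨i - 1, by omega⟩
          have h := hcol (p + 1) hi1 him
          simp only [Nat.add_sub_cancel] at h
          have e : D p 1 = dtwF a b p 1 :=
            ih (p + 1) (by omega) _ _ rfl (by omega) (by omega) le_rfl hn
          rw [h, e, dtwF_down a b (by omega : 1 ≤ p)]
      · -- i = 1
        have hi1' : i = 1 := by omega
        subst hi1'
        rcases Nat.lt_or_ge 1 j with hj1 | hj1
        · obtain ⟨q, rfl⟩ : ∃ q, j = q + 1 := ⟨j - 1, by omega⟩
          have h := hrow (q + 1) hj1 hjn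
          simp only [Nat.add_sub_cancel] at h
          have e : D 1 q = dtwF a b 1 q :=
            ih (1 + q) (by omega) _ _ rfl le_rfl hm (by omega) (by omega)
          rw [h, e, dtwF_right a b (by omega : 1 ≤ q)]
        · have hj1' : j = 1 := by omega
          subst hj1'
          rw [h11, dtwF_diag, Finset.Icc_self, Finset.sum_singleton]
  intro i j hi him hj hjn hij
  rw [key (i + j) i j rfl hi him hj hjn, dtwF_upper a b hij]
end

section
/- For all 1 ≤ i ≤ m and 1 ≤ j ≤ n with j ≤ i, one has D[i,j] = Σ_{j′=1}^{j} (a_{j′} − b_{j′})^2 + Σ_{i′=j+1}^{i} (a_{i′} − b_j)^2. -/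
/-- The claimed closed form for `D i j` when `j ≤ i`. -/
noncomputable def Fsum (a b : ℕ → ℝ) (i j : ℕ) : ℝ :=
  (∑ j' ∈ Finset.Icc 1 j, (a j' - b j') ^ 2) +
    ∑ i' ∈ Finset.Icc (j + 1) i, (a i' - b j) ^ 2

private lemma sum_Icc_bot_s10 (f : ℕ → ℝ) (j t : ℕ) (h : j ≤ t) :
    ∑ x ∈ Finset.Icc j t, f x = f j + ∑ x ∈ Finset.Icc (j+1) t, f x := by
  rw [Finset.Icc_add_one_left_eq_Ioc, ← Finset.Ioc_insert_left h, Finset.sum_insert (by simp)]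

private lemma chain_anti (a : ℕ → ℝ) (m : ℕ)
    (hA : ∀ i, 1 ≤ i → i < m → a (i + 1) ≤ a i) :
    ∀ x y, 1 ≤ x → x ≤ y → y ≤ m → a y ≤ a x := by
  intro x y h1 hxy hym
  induction y, hxy using Nat.le_induction with
  | base => exact le_refl _
  | succ y hy ih => exact le_trans (hA y (by omega) (by omega)) (ih (by omega))

private lemma chain_mono (b : ℕ → ℝ) (n : ℕ)
    (hB : ∀ j, 1 ≤ j → j < n → b j ≤ b (j + 1)) :
    ∀ x y, 1 ≤ x → x ≤ y → y ≤ n → b x ≤ b y := by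
  intro x y h1 hxy hym
  induction y, hxy using Nat.le_induction with
  | base => exact le_refl _
  | succ y hy ih => exact le_trans (ih (by omega)) (hB y (by omega) (by omega))

private lemma swap_table (a b : ℕ → ℝ) (m n : ℕ) (D : ℕ → ℕ → ℝ)
    (hD : DTWTable a b m n D) :
    DTWTable (fun k => -b k) (fun k => -a k) n m (fun x y => D y x) := by
  obtain ⟨h11, hcol, hrow, hint⟩ := hD
  refine ⟨?_, ?_, ?_, ?_⟩
  · simp only
    rw [h11]; ring
  · intro i h1 hin
    simp only
    rw [hrow i h1 hin]; ring
  · intro j h1 hjm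
    simp only
    rw [hcol j h1 hjm]; ring
  · intro i j h1i hin h1j hjm
    simp only
    rw [hint j i h1j hjm h1i hin, min_comm (D j (i-1)) (D (j-1) i)]
    ring

/-- Main lemma, by induction on a fuel bound for `i + j`. -/
private lemma key : ∀ (k : ℕ) (a b : ℕ → ℝ) (m n : ℕ) (D : ℕ → ℕ → ℝ),
    DTWTable a b m n D →
    (∀ i, 1 ≤ i → i < m → a (i + 1) ≤ a i) →
    (∀ j, 1 ≤ j → j < n → b j ≤ b (j + 1)) →
    b n < a m →
    ∀ i j, i + j ≤ k → 1 ≤ i → i ≤ m → 1 ≤ j → j ≤ n → j ≤ i →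
      D i j = Fsum a b i j := by
  intro k
  induction k with
  | zero => intro a b m n D _ _ _ _ i j hk h1i _ h1j _ _; omega
  | succ k ih =>
    intro a b m n D hD hA hB hAB i j hk h1i him h1j hjn hji
    have hpt : ∀ x y, 1 ≤ x → x ≤ m → 1 ≤ y → y ≤ n → b y < a x := by
      intro x y h1x hxm h1y hyn
      calc b y ≤ b n := chain_mono b n hB y n h1y hyn le_rfl
        _ < a m := hAB
        _ ≤ a x := chain_anti a m hA x m h1x hxm le_rfl
    by_cases hj1 : j = 1
    · subst hj1
      by_cases hi1 : i = 1
      · subst hi1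
        simp [Fsum, hD.1, Finset.Icc_self, Finset.Icc_eq_empty (by omega : ¬ (1+1 ≤ 1))]
      · -- i ≥ 2, first column
        obtain ⟨t, rfl⟩ : ∃ t, i = t + 2 := ⟨i - 2, by omega⟩
        have hrec := hD.2.1 (t+2) (by omega) him
        have hIH : D (t+1) 1 = Fsum a b (t+1) 1 :=
          ih a b m n D hD hA hB hAB (t+1) 1 (by omega) (by omega) (by omega)
            le_rfl hjn (by omega)
        have : Fsum a b (t+2) 1 = Fsum a b (t+1) 1 + (a (t+2) - b 1) ^ 2 := by
          simp only [Fsum]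
          rw [Finset.sum_Icc_succ_top (by omega : 1 + 1 ≤ t + 2)]
          ring
        rw [show t + 2 - 1 = t + 1 from rfl] at hrec
        rw [hrec, hIH, this]
    · -- j ≥ 2, hence i ≥ 2
      have h2j : 2 ≤ j := by omega
      have h2i : 2 ≤ i := by omega
      have hrec := hD.2.2.2 i j (by omega) him (by omega) hjn
      have hIJ1 : D i (j-1) = Fsum a b i (j-1) :=
        ih a b m n D hD hA hB hAB i (j-1) (by omega) h1i him (by omega) (by omega)
          (by omega)
      have hI1J1 : D (i-1) (j-1) = Fsum a b (i-1) (j-1) :=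
        ih a b m n D hD hA hB hAB (i-1) (j-1) (by omega) (by omega) (by omega)
          (by omega) (by omega) (by omega)
      -- Fsum i (j-1) = Fsum (i-1) (j-1) + (a i - b (j-1))^2
      have hFtop : Fsum a b i (j-1) = Fsum a b (i-1) (j-1) + (a i - b (j-1)) ^ 2 := by
        obtain ⟨t, rfl⟩ : ∃ t, i = t + 1 := ⟨i - 1, by omega⟩
        simp only [Fsum, Nat.add_sub_cancel]
        rw [Finset.sum_Icc_succ_top (by omega : j - 1 + 1 ≤ t + 1)]
        ring
      by_cases hjlt : j ≤ i - 1
      · -- j < i : the min is D (i-1) j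
        have hI1J : D (i-1) j = Fsum a b (i-1) j :=
          ih a b m n D hD hA hB hAB (i-1) j (by omega) (by omega) (by omega)
            h1j hjn hjlt
        -- ineq1 : Fsum (i-1) j ≤ Fsum (i-1) (j-1)
        have ineq1 : Fsum a b (i-1) j ≤ Fsum a b (i-1) (j-1) := by
          have hLHS : Fsum a b (i-1) j
              = (∑ x ∈ Finset.Icc 1 (j-1), (a x - b x) ^ 2)
                + ∑ x ∈ Finset.Icc j (i-1), (a x - b j) ^ 2 := by
            simp only [Fsum]
            rw [show j = (j-1) + 1 from (by omega), Finset.sum_Icc_succ_top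
              (by omega : 1 ≤ j - 1 + 1),
              sum_Icc_bot_s10 (fun x => (a x - b ((j-1)+1)) ^ 2) ((j-1)+1) (i-1) (by omega)]
            rw [show j - 1 + 1 = j from (by omega)]
            ring
          have hRHS : Fsum a b (i-1) (j-1)
              = (∑ x ∈ Finset.Icc 1 (j-1), (a x - b x) ^ 2)
                + ∑ x ∈ Finset.Icc j (i-1), (a x - b (j-1)) ^ 2 := by
            simp only [Fsum]
            rw [show j - 1 + 1 = j from (by omega)]
          rw [hLHS, hRHS]
          have hterm : ∀ x ∈ Finset.Icc j (i-1),
              (a x - b j) ^ 2 ≤ (a x - b (j-1)) ^ 2 := by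
            intro x hx
            simp only [Finset.mem_Icc] at hx
            have hb1 : b (j-1) ≤ b j := by
              have := hB (j-1) (by omega) (by omega)
              rwa [show j - 1 + 1 = j from (by omega)] at this
            have hba : b j < a x := hpt x j (by omega) (by omega) h1j hjn
            have h0 : (0:ℝ) ≤ a x - b j := by linarith
            exact pow_le_pow_left₀ h0 (by linarith) 2
          linarith [Finset.sum_le_sum hterm]
        have ineq2 : Fsum a b (i-1) j ≤ Fsum a b i (j-1) := by
          rw [hFtop]
          nlinarith [sq_nonneg (a i - b (j-1))]
        have hmin : min (min (Fsum a b i (j-1)) (Fsum a b (i-1) j)) (Fsum a b (i-1) (j-1))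
            = Fsum a b (i-1) j := by
          rw [min_eq_right ineq2, min_eq_left ineq1]
        have hFij : Fsum a b i j = Fsum a b (i-1) j + (a i - b j) ^ 2 := by
          obtain ⟨t, rfl⟩ : ∃ t, i = t + 1 := ⟨i - 1, by omega⟩
          simp only [Fsum, Nat.add_sub_cancel]
          rw [Finset.sum_Icc_succ_top (by omega : j + 1 ≤ t + 1)]
          ring
        rw [hrec, hIJ1, hI1J, hI1J1, hmin, hFij]
      · -- j = i : use the swapped table for D (i-1) i
        have hji' : j = i := by omega
        subst hji'
        have hswap := swap_table a b m n D hD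
        have hI1J : D (j-1) j = Fsum (fun k => -b k) (fun k => -a k) j (j-1) := by
          refine ih (fun k => -b k) (fun k => -a k) n m (fun x y => D y x) hswap
            ?_ ?_ ?_ j (j-1) (by omega) (by omega) hjn (by omega) (by omega) (by omega)
          · intro x h1 hx
            simpa using hB x h1 hx
          · intro x h1 hx
            simpa using hA x h1 hx
          · simpa using hAB
        have hswapF : Fsum (fun k => -b k) (fun k => -a k) j (j-1)
            = Fsum a b (j-1) (j-1) + (a (j-1) - b j) ^ 2 := by
          simp only [Fsum]
          rw [show j - 1 + 1 = j from (by omega), Finset.Icc_self,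
            Finset.sum_singleton,
            Finset.Icc_eq_empty (by omega : ¬ (j ≤ j - 1)),
            Finset.sum_empty]
          rw [show (∑ x ∈ Finset.Icc 1 (j-1), (-b x - -a x) ^ 2)
              = ∑ x ∈ Finset.Icc 1 (j-1), (a x - b x) ^ 2 from
            Finset.sum_congr rfl (fun x _ => by ring)]
          ring
        have hF1 : Fsum a b j (j-1) = Fsum a b (j-1) (j-1) + (a j - b (j-1)) ^ 2 := by
          simpa using hFtop
        have hFjj : Fsum a b j j = Fsum a b (j-1) (j-1) + (a j - b j) ^ 2 := by
          simp only [Fsum]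
          rw [show j = (j-1) + 1 from (by omega), Finset.sum_Icc_succ_top
            (by omega : 1 ≤ j - 1 + 1)]
          rw [show j - 1 + 1 = j from (by omega),
            Finset.Icc_eq_empty (by omega : ¬ (j + 1 ≤ j)),
            Finset.Icc_eq_empty (by omega : ¬ (j - 1 + 1 ≤ j - 1)),
            Finset.sum_empty, Finset.sum_empty]
          ring
        have hmin : min (min (Fsum a b j (j-1))
              (Fsum a b (j-1) (j-1) + (a (j-1) - b j) ^ 2)) (Fsum a b (j-1) (j-1))
            = Fsum a b (j-1) (j-1) := by
          rw [hF1]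
          have h1 : Fsum a b (j-1) (j-1) ≤ Fsum a b (j-1) (j-1) + (a j - b (j-1)) ^ 2 := by
            nlinarith [sq_nonneg (a j - b (j-1))]
          have h2 : Fsum a b (j-1) (j-1) ≤ Fsum a b (j-1) (j-1) + (a (j-1) - b j) ^ 2 := by
            nlinarith [sq_nonneg (a (j-1) - b j)]
          rw [min_eq_right (le_min h1 h2)]
        rw [hrec, hIJ1, hI1J, hswapF, hI1J1, hF1, ← hF1, hmin, hFjj]

theorem stmt_10 (a b : ℕ → ℝ) (m n : ℕ) (hm : 1 ≤ m) (hn : 1 ≤ n)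
    (D : ℕ → ℕ → ℝ) (hD : DTWTable a b m n D)
    (hA : ∀ i, 1 ≤ i → i < m → a (i + 1) ≤ a i)
    (hB : ∀ j, 1 ≤ j → j < n → b j ≤ b (j + 1))
    (hAB : b n < a m) :
    ∀ i j, 1 ≤ i → i ≤ m → 1 ≤ j → j ≤ n → j ≤ i →
      D i j = (∑ j' ∈ Finset.Icc 1 j, (a j' - b j') ^ 2) +
        ∑ i' ∈ Finset.Icc (j + 1) i, (a i' - b j) ^ 2 := by
  intro i j h1i him h1j hjn hji
  exact key (m + n) a b m n D hD hA hB hAB i j (by omega) h1i him h1j hjn hji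
end

section
/- For every 2 ≤ i ≤ m and every j with i < j ≤ n−1, if a_{i−1} ≠ a_i, then D[i,j+1] − D[i−1,j+1] ≠ D′[i,j] − D′[i−1,j]. -/
open Finset


lemma dtw_sum_Icc_bot (f : ℕ → ℝ) {s t : ℕ} (h : s ≤ t) :
    ∑ l ∈ Icc s t, f l = f s + ∑ l ∈ Icc (s+1) t, f l := by
  rw [Finset.Icc_eq_cons_Ioc h, Finset.sum_cons, Finset.Icc_add_one_left_eq_Ioc]

lemma dtw_sum_shift (f : ℕ → ℝ) (s t : ℕ) :
    ∑ l ∈ Icc s t, f (l+1) = ∑ l ∈ Icc (s+1) (t+1), f l := by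
  rw [← Finset.map_add_right_Icc, Finset.sum_map]
  rfl

lemma dtw_anti_of_step {f : ℕ → ℝ} {m : ℕ} (h : ∀ i, 1 ≤ i → i < m → f (i+1) ≤ f i) :
    ∀ i i', 1 ≤ i → i ≤ i' → i' ≤ m → f i' ≤ f i := by
  intro i i' h1 hle hm
  induction i', hle using Nat.le_induction with
  | base => exact le_rfl
  | succ k hk ih => exact (h k (h1.trans hk) (by omega)).trans (ih (by omega))

lemma dtw_mono_of_step {f : ℕ → ℝ} {m : ℕ} (h : ∀ i, 1 ≤ i → i < m → f i ≤ f (i+1)) :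
    ∀ i i', 1 ≤ i → i ≤ i' → i' ≤ m → f i ≤ f i' := by
  intro i i' h1 hle hm
  induction i', hle using Nat.le_induction with
  | base => exact le_rfl
  | succ k hk ih => exact (ih (by omega)).trans (h k (h1.trans hk) (by omega))

/-- Closed form of the DTW table when `a` is decreasing, `b` increasing and `a > b`
pointwise: the optimal path is diagonal up to the diagonal, then straight. -/
lemma dtw_closed_form (a b : ℕ → ℝ) (m n : ℕ) (D : ℕ → ℕ → ℝ)
    (hD : DTWTable a b m n D)
    (ha : ∀ i i', 1 ≤ i → i ≤ i' → i' ≤ m → a i' ≤ a i)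
    (hb : ∀ j j', 1 ≤ j → j ≤ j' → j' ≤ n → b j ≤ b j')
    (hab : ∀ i j, 1 ≤ i → i ≤ m → 1 ≤ j → j ≤ n → b j < a i) :
    ∀ i j, 1 ≤ i → i ≤ m → 1 ≤ j → j ≤ n →
      (i ≤ j → D i j = (∑ k ∈ Icc 1 i, (a k - b k)^2) + ∑ l ∈ Icc (i+1) j, (a i - b l)^2) ∧
      (j ≤ i → D i j = (∑ k ∈ Icc 1 j, (a k - b k)^2) + ∑ l ∈ Icc (j+1) i, (a l - b j)^2) := by
  obtain ⟨h11, hrow, hcol, hind⟩ := hD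
  suffices H : ∀ N i j, i + j ≤ N → 1 ≤ i → i ≤ m → 1 ≤ j → j ≤ n →
      (i ≤ j → D i j = (∑ k ∈ Icc 1 i, (a k - b k)^2) + ∑ l ∈ Icc (i+1) j, (a i - b l)^2) ∧
      (j ≤ i → D i j = (∑ k ∈ Icc 1 j, (a k - b k)^2) + ∑ l ∈ Icc (j+1) i, (a l - b j)^2) by
    intro i j h1 h2 h3 h4
    exact H (i + j) i j le_rfl h1 h2 h3 h4
  intro N
  induction N with
  | zero => intro i j h h1 _ h3 _; omega
  | succ N IH =>
    intro i j hN h1i him h1j hjn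
    rcases Nat.lt_or_ge i 2 with hi | hi
    · -- i = 1
      have hi1 : i = 1 := by omega
      subst hi1
      rcases Nat.lt_or_ge j 2 with hj | hj
      · have hj1 : j = 1 := by omega
        subst hj1
        constructor <;> intro _ <;>
          simp [h11, Finset.Icc_self, Finset.Icc_eq_empty_of_lt (by omega : (1:ℕ)+1 > 1)]
      · -- j ≥ 2, first row
        obtain ⟨jp, rfl⟩ : ∃ jp, j = jp + 1 := ⟨j - 1, by omega⟩
        constructor
        · intro _
          have hrec := hcol (jp+1) (by omega) hjn
          simp only [Nat.add_sub_cancel] at hrec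
          have hIH := (IH 1 jp (by omega) (by omega) him (by omega) (by omega)).1 (by omega)
          rw [hrec, hIH, Finset.sum_Icc_succ_top (by omega : 1 + 1 ≤ jp + 1)]
          ring
        · intro h; omega
    · -- i ≥ 2
      obtain ⟨ip, rfl⟩ : ∃ ip, i = ip + 1 := ⟨i - 1, by omega⟩
      have hip1 : 1 ≤ ip := by omega
      rcases Nat.lt_or_ge j 2 with hj | hj
      · -- j = 1, first column
        have hj1 : j = 1 := by omega
        subst hj1
        constructor
        · intro h; omega
        · intro _
          have hrec := hrow (ip+1) (by omega) him
          simp only [Nat.add_sub_cancel] at hrec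
          have hIH := (IH ip 1 (by omega) (by omega) (by omega) (by omega) (by omega)).2 (by omega)
          rw [hrec, hIH, Finset.sum_Icc_succ_top (by omega : 1 + 1 ≤ ip + 1)]
          ring
      · -- interior
        obtain ⟨jp, rfl⟩ : ∃ jp, j = jp + 1 := ⟨j - 1, by omega⟩
        have hjp1 : 1 ≤ jp := by omega
        have hrec := hind (ip+1) (jp+1) (by omega) him (by omega) hjn
        simp only [Nat.add_sub_cancel] at hrec
        have hZ := IH (ip+1) jp (by omega) (by omega) him (by omega) (by omega)
        have hY := IH ip (jp+1) (by omega) (by omega) (by omega) (by omega) (by omega)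
        have hX := IH ip jp (by omega) (by omega) (by omega) (by omega) (by omega)
        rcases lt_trichotomy ip jp with hij | hij | hij
        · -- above diagonal: i < j, min is D i (j-1)
          have eZ := hZ.1 (by omega)
          have eY := hY.1 (by omega)
          have eX := hX.1 (by omega)
          have hstep : a (ip+1) ≤ a ip := ha ip (ip+1) hip1 (by omega) him
          -- Z ≤ X
          have hZX : D (ip+1) jp ≤ D ip jp := by
            rw [eZ, eX]
            rw [Finset.sum_Icc_succ_top (by omega : 1 ≤ ip + 1),
              dtw_sum_Icc_bot (fun l => (a ip - b l)^2) (by omega : ip + 1 ≤ jp)]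
            have hsum : ∑ l ∈ Icc (ip+1+1) jp, (a (ip+1) - b l)^2
                ≤ ∑ l ∈ Icc (ip+1+1) jp, (a ip - b l)^2 := by
              apply Finset.sum_le_sum
              intro l hl
              simp only [Finset.mem_Icc] at hl
              have hbl : b l < a (ip+1) := hab (ip+1) l (by omega) him (by omega) (by omega)
              have h0 : (0:ℝ) ≤ a (ip+1) - b l := by linarith
              exact pow_le_pow_left₀ h0 (by linarith) 2
            have hterm : (a (ip+1) - b (ip+1))^2 ≤ (a ip - b (ip+1))^2 := by
              have hbl : b (ip+1) < a (ip+1) :=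
                hab (ip+1) (ip+1) (by omega) him (by omega) (by omega)
              have h0 : (0:ℝ) ≤ a (ip+1) - b (ip+1) := by linarith
              exact pow_le_pow_left₀ h0 (by linarith) 2
            linarith
          -- X ≤ Y
          have hXY : D ip jp ≤ D ip (jp+1) := by
            rw [eX, eY, Finset.sum_Icc_succ_top (by omega : ip + 1 ≤ jp + 1)]
            nlinarith [sq_nonneg (a ip - b (jp+1))]
          have hmin : min (min (D (ip+1) jp) (D ip (jp+1))) (D ip jp) = D (ip+1) jp := by
            rw [min_eq_left (hZX.trans hXY), min_eq_left hZX]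
          constructor
          · intro _
            rw [hrec, hmin, eZ, Finset.sum_Icc_succ_top (by omega : ip + 1 + 1 ≤ jp + 1)]
            ring
          · intro h; omega
        · -- diagonal: i = j
          subst hij
          have eZ := hZ.2 (by omega)
          have eY := hY.1 (by omega)
          have eX := hX.1 (by omega)
          have hsimp : ∀ c : ℝ, ∑ l ∈ Icc (ip+1) ip, c = 0 := by
            intro c; rw [Finset.Icc_eq_empty_of_lt (by omega)]; simp
          have hXZ : D ip ip ≤ D (ip+1) ip := by
            rw [eX, eZ]
            rw [Finset.Icc_eq_empty_of_lt (by omega : ip < ip + 1), Finset.sum_empty,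
              Finset.Icc_self, Finset.sum_singleton]
            nlinarith [sq_nonneg (a (ip+1) - b ip)]
          have hXY : D ip ip ≤ D ip (ip+1) := by
            rw [eX, eY]
            rw [Finset.Icc_eq_empty_of_lt (by omega : ip < ip + 1), Finset.sum_empty,
              Finset.Icc_self, Finset.sum_singleton]
            nlinarith [sq_nonneg (a ip - b (ip+1))]
          have hmin : min (min (D (ip+1) ip) (D ip (ip+1))) (D ip ip) = D ip ip :=
            min_eq_right (le_min hXZ hXY)
          have key : D (ip+1) (ip+1)
              = ∑ k ∈ Icc 1 (ip+1), (a k - b k)^2 := by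
            rw [hrec, hmin, eX, Finset.Icc_eq_empty_of_lt (by omega : ip < ip + 1),
              Finset.sum_empty, Finset.sum_Icc_succ_top (by omega : 1 ≤ ip + 1)]
            ring
          constructor
          · intro _
            rw [key, Finset.Icc_eq_empty_of_lt (by omega : ip + 1 < ip + 1 + 1),
              Finset.sum_empty]
            ring
          · intro _
            rw [key, Finset.Icc_eq_empty_of_lt (by omega : ip + 1 < ip + 1 + 1),
              Finset.sum_empty]
            ring
        · -- below diagonal: j < i, min is D (i-1) j
          have eZ := hZ.2 (by omega)
          have eY := hY.2 (by omega)
          have eX := hX.2 (by omega)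
          have hbstep : b jp ≤ b (jp+1) := hb jp (jp+1) hjp1 (by omega) hjn
          have hYX : D ip (jp+1) ≤ D ip jp := by
            rw [eY, eX]
            rw [Finset.sum_Icc_succ_top (by omega : 1 ≤ jp + 1),
              dtw_sum_Icc_bot (fun l => (a l - b jp)^2) (by omega : jp + 1 ≤ ip)]
            have hsum : ∑ l ∈ Icc (jp+1+1) ip, (a l - b (jp+1))^2
                ≤ ∑ l ∈ Icc (jp+1+1) ip, (a l - b jp)^2 := by
              apply Finset.sum_le_sum
              intro l hl
              simp only [Finset.mem_Icc] at hl
              have hbl : b (jp+1) < a l := hab l (jp+1) (by omega) (by omega) (by omega) (by omega)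
              have h0 : (0:ℝ) ≤ a l - b (jp+1) := by linarith
              exact pow_le_pow_left₀ h0 (by linarith) 2
            have hterm : (a (jp+1) - b (jp+1))^2 ≤ (a (jp+1) - b jp)^2 := by
              have hbl : b (jp+1) < a (jp+1) :=
                hab (jp+1) (jp+1) (by omega) (by omega) (by omega) (by omega)
              have h0 : (0:ℝ) ≤ a (jp+1) - b (jp+1) := by linarith
              exact pow_le_pow_left₀ h0 (by linarith) 2
            linarith
          have hXZ : D ip jp ≤ D (ip+1) jp := by
            rw [eX, eZ, Finset.sum_Icc_succ_top (by omega : jp + 1 ≤ ip + 1)]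
            nlinarith [sq_nonneg (a (ip+1) - b jp)]
          have hmin : min (min (D (ip+1) jp) (D ip (jp+1))) (D ip jp) = D ip (jp+1) := by
            rw [min_eq_right (hYX.trans hXZ), min_eq_left hYX]
          constructor
          · intro h; omega
          · intro _
            rw [hrec, hmin, eY, Finset.sum_Icc_succ_top (by omega : jp + 1 + 1 ≤ ip + 1)]
            ring

theorem stmt_13 (a b : ℕ → ℝ) (m n : ℕ) (hm : 2 ≤ m) (hn : 3 ≤ n)
    (D D' : ℕ → ℕ → ℝ) (hD : DTWTable a b m n D)
    (hD' : DTWTable a (fun j => b (j + 1)) m (n - 1) D')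
    (hA : ∀ i, 1 ≤ i → i < m → a (i + 1) ≤ a i)
    (hB : ∀ j, 1 ≤ j → j < n → b j ≤ b (j + 1))
    (hAB : b n < a m) :
    ∀ i j, 2 ≤ i → i ≤ m → i < j → j ≤ n - 1 → a (i - 1) ≠ a i →
      D i (j + 1) - D (i - 1) (j + 1) ≠ D' i j - D' (i - 1) j := by
  have ha : ∀ i i', 1 ≤ i → i ≤ i' → i' ≤ m → a i' ≤ a i := dtw_anti_of_step hA
  have hb : ∀ j j', 1 ≤ j → j ≤ j' → j' ≤ n → b j ≤ b j' := dtw_mono_of_step hB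
  have hab : ∀ i j, 1 ≤ i → i ≤ m → 1 ≤ j → j ≤ n → b j < a i := by
    intro i j h1 h2 h3 h4
    calc b j ≤ b n := hb j n h3 h4 le_rfl
    _ < a m := hAB
    _ ≤ a i := ha i m h1 h2 le_rfl
  have hb' : ∀ j j', 1 ≤ j → j ≤ j' → j' ≤ n - 1 → b (j+1) ≤ b (j'+1) := by
    have := dtw_mono_of_step (f := fun j => b (j+1)) (m := n - 1)
      (fun j h1 h2 => hB (j+1) (by omega) (by omega))
    exact this
  have hab' : ∀ i j, 1 ≤ i → i ≤ m → 1 ≤ j → j ≤ n - 1 → b (j+1) < a i := by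
    intro i j h1 h2 h3 h4
    exact hab i (j+1) h1 h2 (by omega) (by omega)
  have CF := dtw_closed_form a b m n D hD ha hb hab
  have CF' := dtw_closed_form a (fun j => b (j+1)) m (n-1) D' hD' ha hb' hab'
  intro i j h2i him hij hjn hne
  obtain ⟨ip, rfl⟩ : ∃ ip, i = ip + 1 := ⟨i - 1, by omega⟩
  simp only [Nat.add_sub_cancel] at hne ⊢
  have hip1 : 1 ≤ ip := by omega
  have E1 := (CF (ip+1) (j+1) (by omega) him (by omega) (by omega)).1 (by omega)
  have E2 := (CF ip (j+1) (by omega) (by omega) (by omega) (by omega)).1 (by omega)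
  have E3 := (CF' (ip+1) j (by omega) him (by omega) (by omega)).1 (by omega)
  have E4 := (CF' ip j (by omega) (by omega) (by omega) (by omega)).1 (by omega)
  have sh3 : ∑ x ∈ Icc (ip+1+1) j, (a (ip+1) - b (x+1))^2
      = ∑ l ∈ Icc (ip+3) (j+1), (a (ip+1) - b l)^2 := by
    have := dtw_sum_shift (fun l => (a (ip+1) - b l)^2) (ip+2) j
    simpa using this
  have sh4 : ∑ x ∈ Icc (ip+1) j, (a ip - b (x+1))^2
      = ∑ l ∈ Icc (ip+2) (j+1), (a ip - b l)^2 := by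
    have := dtw_sum_shift (fun l => (a ip - b l)^2) (ip+1) j
    simpa using this
  rw [sh3] at E3
  rw [sh4] at E4
  rw [E1, E2, E3, E4]
  have h5 : ∑ l ∈ Icc (ip+1) (j+1), (a ip - b l)^2
      = (a ip - b (ip+1))^2 + ∑ l ∈ Icc (ip+2) (j+1), (a ip - b l)^2 :=
    dtw_sum_Icc_bot _ (by omega)
  have h6 : ∑ l ∈ Icc (ip+2) (j+1), (a (ip+1) - b l)^2
      = (a (ip+1) - b (ip+2))^2 + ∑ l ∈ Icc (ip+3) (j+1), (a (ip+1) - b l)^2 :=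
    dtw_sum_Icc_bot _ (by omega)
  have h7 : ∑ k ∈ Icc 1 (ip+1), (a k - b k)^2
      = (∑ k ∈ Icc 1 ip, (a k - b k)^2) + (a (ip+1) - b (ip+1))^2 :=
    Finset.sum_Icc_succ_top (by omega) _
  have h8 : ∑ k ∈ Icc 1 (ip+1), (a k - b (k+1))^2
      = (∑ k ∈ Icc 1 ip, (a k - b (k+1))^2) + (a (ip+1) - b (ip+2))^2 :=
    Finset.sum_Icc_succ_top (by omega) _
  have hlt : (a (ip+1) - b (ip+1))^2 < (a ip - b (ip+1))^2 := by
    have h1 : b (ip+1) < a (ip+1) := hab (ip+1) (ip+1) (by omega) him (by omega) (by omega)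
    have h2 : a (ip+1) ≤ a ip := ha ip (ip+1) hip1 (by omega) him
    have h3 : a (ip+1) < a ip := lt_of_le_of_ne h2 (Ne.symm hne)
    nlinarith
  intro hcon
  -- the difference of the two sides equals (a(ip+1)-b(ip+1))^2 - (a ip - b(ip+1))^2 ≠ 0
  rw [h5, h6, h7, h8] at hcon
  linarith
end

section
/- The number of pairs (i,j) with 2 ≤ i ≤ m and 2 ≤ j ≤ n−1 such that D[i,j+1] − D[i−1,j+1] ≠ D′[i,j] − D′[i−1,j] or D[i,j+1] − D[i,j] ≠ D′[i,j] − D′[i,j−1] is at least Σ_{I=1}^{M−1} max(n − 2 − I·k, 0) + Σ_{J=1}^{N−1} max(m − J·l, 0). -/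
open Finset

noncomputable def Ptab (a b : ℕ → ℝ) (i j : ℕ) : ℝ :=
  ∑ t ∈ Finset.Icc 1 (max i j), (a (min t i) - b (min t j)) ^ 2

lemma Ptab_negtrans (a b : ℕ → ℝ) (i j : ℕ) :
    Ptab a b i j = Ptab (fun t => -b t) (fun t => -a t) j i := by
  unfold Ptab
  rw [max_comm]
  exact Finset.sum_congr rfl fun t _ => by ring

lemma Ptab_11 (a b : ℕ → ℝ) : Ptab a b 1 1 = (a 1 - b 1) ^ 2 := by
  simp [Ptab]

lemma Ptab_right (a b : ℕ → ℝ) (i j : ℕ) (hij : i ≤ j) (hj : 1 ≤ j) :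
    Ptab a b i (j + 1) = Ptab a b i j + (a i - b (j + 1)) ^ 2 := by
  unfold Ptab
  rw [max_eq_right (le_trans hij (Nat.le_succ j)), max_eq_right hij,
    Finset.sum_Icc_succ_top (by omega : 1 ≤ j + 1)]
  congr 1
  · refine Finset.sum_congr rfl fun t ht => ?_
    rw [Finset.mem_Icc] at ht
    rw [show min t (j+1) = min t j by omega]
  · rw [show min (j+1) i = i by omega, show min (j+1) (j+1) = j+1 by omega]

lemma Ptab_left (a b : ℕ → ℝ) (i j : ℕ) (hij : j ≤ i) (hi : 1 ≤ i) :
    Ptab a b (i + 1) j = Ptab a b i j + (a (i + 1) - b j) ^ 2 := by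
  rw [Ptab_negtrans a b (i+1) j, Ptab_negtrans a b i j,
    Ptab_right _ _ j i hij hi]
  congr 1
  ring

lemma Ptab_diag (a b : ℕ → ℝ) (i : ℕ) (hi : 1 ≤ i) :
    Ptab a b (i + 1) (i + 1) = Ptab a b i i + (a (i + 1) - b (i + 1)) ^ 2 := by
  unfold Ptab
  rw [max_self, max_self, Finset.sum_Icc_succ_top (by omega : 1 ≤ i + 1)]
  congr 1
  · refine Finset.sum_congr rfl fun t ht => ?_
    rw [Finset.mem_Icc] at ht
    rw [show min t (i+1) = min t i by omega]
  · simp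

lemma Ptab_row_mono (a b : ℕ → ℝ) (i j : ℕ) (hi : 1 ≤ i) (hij : i + 1 ≤ j)
    (hmono : a (i + 1) ≤ a i) (hb : ∀ s, 1 ≤ s → s ≤ j → b s ≤ a (i + 1)) :
    Ptab a b (i + 1) j ≤ Ptab a b i j := by
  unfold Ptab
  rw [max_eq_right hij, max_eq_right (by omega : i ≤ j)]
  refine Finset.sum_le_sum fun t ht => ?_
  rw [Finset.mem_Icc] at ht
  by_cases h : t ≤ i
  · rw [show min t (i+1) = min t i by omega]
  · rw [show min t (i+1) = i+1 by omega, show min t i = i by omega]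
    have hbs : b (min t j) ≤ a (i + 1) := hb _ (by omega) (by omega)
    have h1 : (0:ℝ) ≤ a (i+1) - b (min t j) := by linarith
    have h2 : a (i+1) - b (min t j) ≤ a i - b (min t j) := by linarith
    exact pow_le_pow_left₀ h1 h2 2

lemma Ptab_col_mono (a b : ℕ → ℝ) (i j : ℕ) (hj : 1 ≤ j) (hji : j + 1 ≤ i)
    (hmono : b j ≤ b (j + 1)) (hb : ∀ s, 1 ≤ s → s ≤ i → b (j + 1) ≤ a s) :
    Ptab a b i (j + 1) ≤ Ptab a b i j := by
  rw [Ptab_negtrans a b i (j+1), Ptab_negtrans a b i j]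
  exact Ptab_row_mono _ _ j i hj hji (by simpa using hmono)
    (fun s h1 h2 => by simpa using hb s h1 h2)

theorem dtw_closed_s15 (a b : ℕ → ℝ) (m n : ℕ) (D : ℕ → ℕ → ℝ)
    (hD : DTWTable a b m n D)
    (hma : ∀ i, 1 ≤ i → i + 1 ≤ m → a (i + 1) ≤ a i)
    (hmb : ∀ j, 1 ≤ j → j + 1 ≤ n → b j ≤ b (j + 1))
    (hab : ∀ i j, 1 ≤ i → i ≤ m → 1 ≤ j → j ≤ n → b j ≤ a i) :
    ∀ i j, 1 ≤ i → i ≤ m → 1 ≤ j → j ≤ n → D i j = Ptab a b i j := by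
  obtain ⟨h11, hcol, hrow, hrec⟩ := hD
  suffices H : ∀ s i j, i + j ≤ s → 1 ≤ i → i ≤ m → 1 ≤ j → j ≤ n →
      D i j = Ptab a b i j from fun i j => H (i + j) i j le_rfl
  intro s
  induction s with
  | zero => intro i j hs hi1; omega
  | succ s ih =>
    intro i j hs hi1 him hj1 hjn
    by_cases hi : i = 1
    · subst hi
      by_cases hj : j = 1
      · subst hj; rw [h11, Ptab_11]
      · obtain ⟨j', rfl⟩ : ∃ j', j = j' + 1 := ⟨j - 1, by omega⟩
        have hj'1 : 1 ≤ j' := by omega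
        rw [hrow (j' + 1) (by omega) hjn]
        simp only [Nat.add_sub_cancel]
        rw [ih 1 j' (by omega) le_rfl him hj'1 (by omega),
          Ptab_right a b 1 j' hj'1 hj'1]
    · obtain ⟨i', rfl⟩ : ∃ i', i = i' + 1 := ⟨i - 1, by omega⟩
      have hi'1 : 1 ≤ i' := by omega
      by_cases hj : j = 1
      · subst hj
        rw [hcol (i' + 1) (by omega) him]
        simp only [Nat.add_sub_cancel]
        rw [ih i' 1 (by omega) hi'1 (by omega) le_rfl hjn,
          Ptab_left a b i' 1 hi'1 hi'1]
      · obtain ⟨j', rfl⟩ : ∃ j', j = j' + 1 := ⟨j - 1, by omega⟩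
        have hj'1 : 1 ≤ j' := by omega
        rw [hrec (i' + 1) (j' + 1) (by omega) him (by omega) hjn]
        simp only [Nat.add_sub_cancel]
        rw [ih (i' + 1) j' (by omega) (by omega) him hj'1 (by omega),
          ih i' (j' + 1) (by omega) hi'1 (by omega) (by omega) hjn,
          ih i' j' (by omega) hi'1 (by omega) hj'1 (by omega)]
        have hbA : ∀ s, 1 ≤ s → s ≤ j' → b s ≤ a (i' + 1) :=
          fun t h1 h2 => hab _ t (by omega) him h1 (by omega)
        have hbB : ∀ t, 1 ≤ t → t ≤ i' → b (j' + 1) ≤ a t :=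
          fun t h1 h2 => hab t _ h1 (by omega) (by omega) hjn
        rcases lt_trichotomy i' j' with h | h | h
        · -- i < j : min is D i (j-1) = Ptab (i'+1) j'
          have hA2 : Ptab a b (i' + 1) j' ≤ Ptab a b i' j' :=
            Ptab_row_mono a b i' j' hi'1 (by omega) (hma i' hi'1 him) hbA
          have hA1 : Ptab a b (i' + 1) j' ≤ Ptab a b i' (j' + 1) := by
            rw [Ptab_right a b i' j' (by omega) hj'1]
            nlinarith [sq_nonneg (a i' - b (j' + 1))]
          rw [min_eq_left hA1, min_eq_left hA2,
            Ptab_right a b (i' + 1) j' (by omega) hj'1]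
        · -- diagonal
          subst h
          have hZX : Ptab a b i' i' ≤ Ptab a b (i' + 1) i' := by
            rw [Ptab_left a b i' i' le_rfl hi'1]
            nlinarith [sq_nonneg (a (i' + 1) - b i')]
          have hZY : Ptab a b i' i' ≤ Ptab a b i' (i' + 1) := by
            rw [Ptab_right a b i' i' le_rfl hi'1]
            nlinarith [sq_nonneg (a i' - b (i' + 1))]
          rw [min_eq_right (le_min hZX hZY), Ptab_diag a b i' hi'1]
        · -- i > j : min is D (i-1) j = Ptab i' (j'+1)
          have hY2 : Ptab a b i' (j' + 1) ≤ Ptab a b i' j' :=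
            Ptab_col_mono a b i' j' hj'1 (by omega) (hmb j' hj'1 hjn) hbB
          have hY1 : Ptab a b i' (j' + 1) ≤ Ptab a b (i' + 1) j' := by
            rw [Ptab_left a b i' j' (by omega) hi'1]
            nlinarith [sq_nonneg (a (i' + 1) - b j')]
          rw [min_eq_right hY1, min_eq_left hY2,
            Ptab_left a b i' (j' + 1) (by omega) hi'1]

lemma sum_shift (f : ℕ → ℝ) (p q : ℕ) :
    ∑ t ∈ Finset.Icc p q, f (t + 1) = ∑ t ∈ Finset.Icc (p + 1) (q + 1), f t := by
  rw [← Finset.map_add_right_Icc, Finset.sum_map]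
  rfl

lemma Ptab_rowdiff (a b : ℕ → ℝ) (i j : ℕ) (hi : 1 ≤ i) (hij : i + 1 ≤ j) :
    Ptab a b (i + 1) j - Ptab a b i j =
      ∑ t ∈ Finset.Icc (i + 1) j, ((a (i + 1) - b t) ^ 2 - (a i - b t) ^ 2) := by
  unfold Ptab
  rw [max_eq_right hij, max_eq_right (by omega : i ≤ j), ← Finset.sum_sub_distrib]
  have hsplit : Finset.Icc 1 j = Finset.Icc 1 i ∪ Finset.Icc (i + 1) j := by
    ext t; simp only [Finset.mem_Icc, Finset.mem_union]; omega
  rw [hsplit, Finset.sum_union (by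
    simp only [Finset.disjoint_left, Finset.mem_Icc]; omega)]
  have h1 : ∑ t ∈ Finset.Icc 1 i,
      ((a (min t (i + 1)) - b (min t j)) ^ 2 - (a (min t i) - b (min t j)) ^ 2) = 0 := by
    refine Finset.sum_eq_zero fun t ht => ?_
    rw [Finset.mem_Icc] at ht
    rw [show min t (i + 1) = min t i by omega]
    ring
  rw [h1, zero_add]
  refine Finset.sum_congr rfl fun t ht => ?_
  rw [Finset.mem_Icc] at ht
  rw [show min t (i + 1) = i + 1 by omega, show min t i = i by omega,
    show min t j = t by omega]

lemma Ptab_coldiff (a b : ℕ → ℝ) (i j : ℕ) (hj : 1 ≤ j) (hji : j + 1 ≤ i) :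
    Ptab a b i (j + 1) - Ptab a b i j =
      ∑ t ∈ Finset.Icc (j + 1) i, ((a t - b (j + 1)) ^ 2 - (a t - b j) ^ 2) := by
  rw [Ptab_negtrans a b i (j + 1), Ptab_negtrans a b i j,
    Ptab_rowdiff _ _ j i hj hji]
  exact Finset.sum_congr rfl fun t _ => by ring

lemma key_row (a b : ℕ → ℝ) (i j : ℕ) (hi : 1 ≤ i) (hij : i + 2 ≤ j) :
    (Ptab a b (i + 1) (j + 1) - Ptab a b i (j + 1)) -
      (Ptab a (fun t => b (t + 1)) (i + 1) j - Ptab a (fun t => b (t + 1)) i j) =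
    (a (i + 1) - b (i + 1)) ^ 2 - (a i - b (i + 1)) ^ 2 := by
  rw [Ptab_rowdiff a b i (j + 1) hi (by omega),
    Ptab_rowdiff a (fun t => b (t + 1)) i j hi (by omega)]
  set g : ℕ → ℝ := fun t => (a (i + 1) - b t) ^ 2 - (a i - b t) ^ 2 with hg
  have h2 : ∑ t ∈ Finset.Icc (i + 1) j,
      ((a (i + 1) - b (t + 1)) ^ 2 - (a i - b (t + 1)) ^ 2) =
      ∑ t ∈ Finset.Icc (i + 2) (j + 1), g t := by
    rw [← sum_shift g (i + 1) j]
  rw [h2]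
  have hins : Finset.Icc (i + 1) (j + 1) = insert (i + 1) (Finset.Icc (i + 2) (j + 1)) := by
    ext t; simp only [Finset.mem_Icc, Finset.mem_insert]; omega
  rw [show ∑ t ∈ Finset.Icc (i+1) (j+1), ((a (i + 1) - b t) ^ 2 - (a i - b t) ^ 2)
      = ∑ t ∈ Finset.Icc (i+1) (j+1), g t from rfl,
    hins, Finset.sum_insert (by simp only [Finset.mem_Icc]; omega)]
  simp only [hg]
  ring

lemma key_col (a b : ℕ → ℝ) (i j : ℕ) (hj : 2 ≤ j) (hji : j + 1 ≤ i) :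
    (Ptab a b i (j + 1) - Ptab a b i j) -
      (Ptab a (fun t => b (t + 1)) i j - Ptab a (fun t => b (t + 1)) i (j - 1)) =
    (a j - b j) ^ 2 - (a j - b (j + 1)) ^ 2 := by
  obtain ⟨q, rfl⟩ : ∃ q, j = q + 1 := ⟨j - 1, by omega⟩
  simp only [Nat.add_sub_cancel]
  rw [Ptab_coldiff a b i (q + 1) (by omega) hji,
    Ptab_coldiff a (fun t => b (t + 1)) i q (by omega) (by omega)]
  set h : ℕ → ℝ := fun t => (a t - b (q + 2)) ^ 2 - (a t - b (q + 1)) ^ 2 with hh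
  have e1 : ∑ t ∈ Finset.Icc (q + 1 + 1) i, ((a t - b (q + 1 + 1)) ^ 2 - (a t - b (q + 1)) ^ 2)
      = ∑ t ∈ Finset.Icc (q + 2) i, h t := rfl
  have e2 : ∑ t ∈ Finset.Icc (q + 1) i, ((a t - b (q + 1 + 1)) ^ 2 - (a t - b (q + 1)) ^ 2)
      = ∑ t ∈ Finset.Icc (q + 1) i, h t := rfl
  rw [e1, e2]
  have hins : Finset.Icc (q + 1) i = insert (q + 1) (Finset.Icc (q + 2) i) := by
    ext t; simp only [Finset.mem_Icc, Finset.mem_insert]; omega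
  rw [hins, Finset.sum_insert (by simp only [Finset.mem_Icc]; omega)]
  simp only [hh]
  ring

lemma div_run_lo (k I : ℕ) (hk : 1 ≤ k) (hI : 1 ≤ I) :
    (I * k + k - 1) / k = I := by
  have h1 : I * k + k - 1 = (k - 1) + k * I := by
    have : I * k = k * I := by ring
    omega
  rw [h1, Nat.add_mul_div_left _ _ (by omega : 0 < k),
    Nat.div_eq_of_lt (by omega), Nat.zero_add]

lemma div_run_hi (k I : ℕ) (hk : 1 ≤ k) :
    (I * k + 1 + k - 1) / k = I + 1 := by
  have h1 : I * k + 1 + k - 1 = k * (I + 1) := by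
    have : k * (I + 1) = I * k + k := by ring
    omega
  rw [h1, Nat.mul_div_cancel_left _ (by omega : 0 < k)]

theorem stmt_15 (k l M N : ℕ) (hk : 1 ≤ k) (hl : 2 ≤ l) (hM : 1 ≤ M) (hN : 1 ≤ N)
    (α β : ℕ → ℝ)
    (hα : ∀ I, 1 ≤ I → I < M → α (I + 1) < α I)
    (hβ : ∀ J, 1 ≤ J → J < N → β J < β (J + 1))
    (hαβ : β N < α M)
    (a b : ℕ → ℝ)
    (ha : ∀ i, 1 ≤ i → i ≤ k * M → a i = α ((i + k - 1) / k))
    (hb : ∀ j, 1 ≤ j → j ≤ l * N → b j = β ((j + l - 1) / l))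
    (D D' : ℕ → ℕ → ℝ)
    (hD : DTWTable a b (k * M) (l * N) D)
    (hD' : DTWTable a (fun j => b (j + 1)) (k * M) (l * N - 1) D') :
    (∑ I ∈ Finset.Icc 1 (M - 1), (l * N - 2 - I * k)) +
      (∑ J ∈ Finset.Icc 1 (N - 1), (k * M - J * l)) ≤
    {p : ℕ × ℕ | 2 ≤ p.1 ∧ p.1 ≤ k * M ∧ 2 ≤ p.2 ∧ p.2 ≤ l * N - 1 ∧
      (D p.1 (p.2 + 1) - D (p.1 - 1) (p.2 + 1) ≠ D' p.1 p.2 - D' (p.1 - 1) p.2 ∨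
       D p.1 (p.2 + 1) - D p.1 p.2 ≠ D' p.1 p.2 - D' p.1 (p.2 - 1))}.ncard := by
  classical
  have hm1 : 1 ≤ k * M := Nat.mul_pos hk hM
  have hn2 : 2 ≤ l * N := le_trans hl (Nat.le_mul_of_pos_right l hN)
  -- monotone chains
  have hαle : ∀ I I', 1 ≤ I → I ≤ I' → I' ≤ M → α I' ≤ α I := by
    intro I I' hI hII' hI'M
    obtain ⟨d, rfl⟩ := Nat.exists_eq_add_of_le hII'
    clear hII'
    induction d with
    | zero => simp
    | succ d ih =>
      have h1 : α (I + d + 1) < α (I + d) := hα (I + d) (by omega) (by omega)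
      have h2 := ih (by omega)
      have : I + (d + 1) = I + d + 1 := by omega
      rw [this]
      linarith
  have hβle : ∀ J J', 1 ≤ J → J ≤ J' → J' ≤ N → β J ≤ β J' := by
    intro J J' hJ hJJ' hJ'N
    obtain ⟨d, rfl⟩ := Nat.exists_eq_add_of_le hJJ'
    clear hJJ'
    induction d with
    | zero => simp
    | succ d ih =>
      have h1 : β (J + d) < β (J + d + 1) := hβ (J + d) (by omega) (by omega)
      have h2 := ih (by omega)
      have : J + (d + 1) = J + d + 1 := by omega
      rw [this]
      linarith
  -- index bounds
  have hidxa : ∀ i, 1 ≤ i → i ≤ k * M → 1 ≤ (i + k - 1) / k ∧ (i + k - 1) / k ≤ M := by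
    intro i h1 h2
    constructor
    · rw [Nat.one_le_div_iff (by omega : 0 < k)]; omega
    · have h3 : (i + k - 1) / k < M + 1 := by
        rw [Nat.div_lt_iff_lt_mul (by omega : 0 < k)]
        have : (M + 1) * k = k * M + k := by ring
        omega
      omega
  have hidxb : ∀ j, 1 ≤ j → j ≤ l * N → 1 ≤ (j + l - 1) / l ∧ (j + l - 1) / l ≤ N := by
    intro j h1 h2
    constructor
    · rw [Nat.one_le_div_iff (by omega : 0 < l)]; omega
    · have h3 : (j + l - 1) / l < N + 1 := by
        rw [Nat.div_lt_iff_lt_mul (by omega : 0 < l)]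
        have : (N + 1) * l = l * N + l := by ring
        omega
      omega
  have haval : ∀ i, 1 ≤ i → i ≤ k * M → α M ≤ a i := by
    intro i h1 h2
    rw [ha i h1 h2]
    exact hαle _ M (hidxa i h1 h2).1 (hidxa i h1 h2).2 le_rfl
  have hbval : ∀ j, 1 ≤ j → j ≤ l * N → b j ≤ β N := by
    intro j h1 h2
    rw [hb j h1 h2]
    exact hβle _ N (hidxb j h1 h2).1 (hidxb j h1 h2).2 le_rfl
  have hab : ∀ i j, 1 ≤ i → i ≤ k * M → 1 ≤ j → j ≤ l * N → b j ≤ a i := by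
    intro i j hi1 hi2 hj1 hj2
    have := hbval j hj1 hj2
    have := haval i hi1 hi2
    linarith
  have hma : ∀ i, 1 ≤ i → i + 1 ≤ k * M → a (i + 1) ≤ a i := by
    intro i h1 h2
    rw [ha i h1 (by omega), ha (i + 1) (by omega) h2]
    exact hαle _ _ (hidxa i h1 (by omega)).1
      (Nat.div_le_div_right (by omega)) (hidxa (i + 1) (by omega) h2).2
  have hmb : ∀ j, 1 ≤ j → j + 1 ≤ l * N → b j ≤ b (j + 1) := by
    intro j h1 h2
    rw [hb j h1 (by omega), hb (j + 1) (by omega) h2]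
    exact hβle _ _ (hidxb j h1 (by omega)).1
      (Nat.div_le_div_right (by omega)) (hidxb (j + 1) (by omega) h2).2
  have hDP := dtw_closed_s15 a b (k * M) (l * N) D hD hma hmb hab
  have hD'P := dtw_closed_s15 a (fun j => b (j + 1)) (k * M) (l * N - 1) D' hD' hma
    (fun j h1 h2 => hmb (j + 1) (by omega) (by omega))
    (fun i j hi1 hi2 hj1 hj2 => hab i (j + 1) hi1 hi2 (by omega) (by omega))
  -- witness finsets
  set T1 : Finset (ℕ × ℕ) := (Finset.Icc 1 (M - 1)).biUnion
    (fun I => {I * k + 1} ×ˢ Finset.Icc (I * k + 2) (l * N - 1)) with hT1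
  set T2 : Finset (ℕ × ℕ) := (Finset.Icc 1 (N - 1)).biUnion
    (fun J => Finset.Icc (J * l + 1) (k * M) ×ˢ {J * l}) with hT2
  have hmemT1 : ∀ p : ℕ × ℕ, p ∈ T1 ↔ ∃ I, (1 ≤ I ∧ I ≤ M - 1) ∧
      p.1 = I * k + 1 ∧ I * k + 2 ≤ p.2 ∧ p.2 ≤ l * N - 1 := by
    intro p
    simp only [hT1, Finset.mem_biUnion, Finset.mem_product, Finset.mem_singleton,
      Finset.mem_Icc]
    try tauto
  have hmemT2 : ∀ p : ℕ × ℕ, p ∈ T2 ↔ ∃ J, (1 ≤ J ∧ J ≤ N - 1) ∧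
      J * l + 1 ≤ p.1 ∧ p.1 ≤ k * M ∧ p.2 = J * l := by
    intro p
    simp only [hT2, Finset.mem_biUnion, Finset.mem_product, Finset.mem_singleton,
      Finset.mem_Icc]
    try tauto
  have hlt1 : ∀ p ∈ T1, p.1 < p.2 := by
    intro p hp
    obtain ⟨I, _, h1, h2, _⟩ := (hmemT1 p).1 hp
    omega
  have hlt2 : ∀ p ∈ T2, p.2 < p.1 := by
    intro p hp
    obtain ⟨J, _, h1, _, h2⟩ := (hmemT2 p).1 hp
    omega
  have hdisj : Disjoint T1 T2 := by
    rw [Finset.disjoint_left]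
    intro p h1 h2
    exact absurd (hlt1 p h1) (by have := hlt2 p h2; omega)
  have hcard1 : T1.card = ∑ I ∈ Finset.Icc 1 (M - 1), (l * N - 2 - I * k) := by
    rw [hT1, Finset.card_biUnion]
    · refine Finset.sum_congr rfl fun I hI => ?_
      rw [Finset.card_product, Finset.card_singleton, Nat.card_Icc, one_mul]
      omega
    · intro I hI I' hI' hne
      simp only [Finset.disjoint_left, Finset.mem_product, Finset.mem_singleton,
        Finset.mem_Icc]
      rintro p ⟨h1, -⟩ ⟨h2, -⟩
      have : I * k = I' * k := by omega
      exact hne (Nat.eq_of_mul_eq_mul_right (by omega) this)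
  have hcard2 : T2.card = ∑ J ∈ Finset.Icc 1 (N - 1), (k * M - J * l) := by
    rw [hT2, Finset.card_biUnion]
    · refine Finset.sum_congr rfl fun J hJ => ?_
      rw [Finset.card_product, Finset.card_singleton, Nat.card_Icc, mul_one]
      omega
    · intro J hJ J' hJ' hne
      simp only [Finset.disjoint_left, Finset.mem_product, Finset.mem_singleton,
        Finset.mem_Icc]
      rintro p ⟨-, h1⟩ ⟨-, h2⟩
      have : J * l = J' * l := by omega
      exact hne (Nat.eq_of_mul_eq_mul_right (by omega) this)
  -- the target set
  set S : Set (ℕ × ℕ) := {p : ℕ × ℕ | 2 ≤ p.1 ∧ p.1 ≤ k * M ∧ 2 ≤ p.2 ∧ p.2 ≤ l * N - 1 ∧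
      (D p.1 (p.2 + 1) - D (p.1 - 1) (p.2 + 1) ≠ D' p.1 p.2 - D' (p.1 - 1) p.2 ∨
       D p.1 (p.2 + 1) - D p.1 p.2 ≠ D' p.1 p.2 - D' p.1 (p.2 - 1))} with hS
  have hSfin : S.Finite := by
    apply Set.Finite.subset (Finset.finite_toSet
      (Finset.Icc 2 (k * M) ×ˢ Finset.Icc 2 (l * N - 1)))
    intro p hp
    simp only [hS, Set.mem_setOf_eq] at hp
    simp only [Finset.coe_product, Set.mem_prod, Finset.mem_coe, Finset.mem_Icc]
    exact ⟨⟨hp.1, hp.2.1⟩, ⟨hp.2.2.1, hp.2.2.2.1⟩⟩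
  have hsub : ↑(T1 ∪ T2) ⊆ S := by
    intro p hp
    rw [Finset.coe_union, Set.mem_union] at hp
    rcases hp with hp | hp
    · -- horizontal family
      rw [Finset.mem_coe] at hp
      obtain ⟨I, ⟨hI1, hI2⟩, hp1, hj1, hj2⟩ := (hmemT1 p).1 hp
      obtain ⟨i, j⟩ := p
      simp only at hp1 hj1 hj2
      subst hp1
      have hIk1 : 1 ≤ I * k := Nat.mul_pos (by omega) (by omega)
      have hIkM : I * k + 1 ≤ k * M := by
        have h1 : I * k + k ≤ M * k := by
          have := Nat.mul_le_mul_right k (show I + 1 ≤ M by omega)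
          calc I * k + k = (I + 1) * k := by ring
            _ ≤ M * k := this
        have h2 : M * k = k * M := by ring
        omega
      have hjn : j + 1 ≤ l * N := by omega
      refine ⟨by omega, hIkM, by omega, hj2, Or.inl ?_⟩
      simp only [Nat.add_sub_cancel]
      have e1 := hDP (I * k + 1) (j + 1) (by omega) hIkM (by omega) hjn
      have e2 := hDP (I * k) (j + 1) (by omega) (by omega) (by omega) hjn
      have e3 := hD'P (I * k + 1) j (by omega) hIkM (by omega) (by omega)
      have e4 := hD'P (I * k) j (by omega) (by omega) (by omega) (by omega)
      rw [e1, e2, e3, e4]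
      intro hEq
      have hkey := key_row a b (I * k) j hIk1 (by omega)
      rw [hEq, sub_self] at hkey
      -- values
      have hva1 : a (I * k + 1) = α (I + 1) := by
        rw [ha (I * k + 1) (by omega) hIkM, div_run_hi k I hk]
      have hva0 : a (I * k) = α I := by
        rw [ha (I * k) (by omega) (by omega), div_run_lo k I hk (by omega)]
      have hbb : b (I * k + 1) ≤ β N := hbval (I * k + 1) (by omega) (by omega)
      have hα1 : α M ≤ α (I + 1) := hαle (I + 1) M (by omega) (by omega) le_rfl
      have hα2 : α (I + 1) < α I := hα I (by omega) (by omega)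
      have hx : (0:ℝ) < α (I + 1) - b (I * k + 1) := by linarith
      rw [hva1, hva0] at hkey
      nlinarith [hkey, hx, hα2]
    · -- vertical family
      rw [Finset.mem_coe] at hp
      obtain ⟨J, ⟨hJ1, hJ2⟩, hi1, hi2, hp2⟩ := (hmemT2 p).1 hp
      obtain ⟨i, j⟩ := p
      simp only at hi1 hi2 hp2
      subst hp2
      have hJl2 : 2 ≤ J * l := le_trans hl (Nat.le_mul_of_pos_left l (by omega))
      have hJlN : J * l + 1 ≤ l * N - 1 := by
        have h1 : J * l + l ≤ N * l := by
          have := Nat.mul_le_mul_right l (show J + 1 ≤ N by omega)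
          calc J * l + l = (J + 1) * l := by ring
            _ ≤ N * l := this
        have h2 : N * l = l * N := by ring
        omega
      refine ⟨by omega, hi2, by omega, by omega, Or.inr ?_⟩
      have e1 := hDP i (J * l + 1) (by omega) hi2 (by omega) (by omega)
      have e2 := hDP i (J * l) (by omega) hi2 (by omega) (by omega)
      have e3 := hD'P i (J * l) (by omega) hi2 (by omega) (by omega)
      have e4 := hD'P i (J * l - 1) (by omega) hi2 (by omega) (by omega)
      rw [e1, e2, e3, e4]
      intro hEq
      have hkey := key_col a b i (J * l) hJl2 (by omega)
      rw [hEq, sub_self] at hkey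
      have hvb0 : b (J * l) = β J := by
        rw [hb (J * l) (by omega) (by omega), div_run_lo l J (by omega) (by omega)]
      have hvb1 : b (J * l + 1) = β (J + 1) := by
        rw [hb (J * l + 1) (by omega) (by omega), div_run_hi l J (by omega)]
      have haa : α M ≤ a (J * l) := haval (J * l) (by omega) (by omega)
      have hβ1 : β (J + 1) ≤ β N := hβle (J + 1) N (by omega) (by omega) le_rfl
      have hβ2 : β J < β (J + 1) := hβ J (by omega) (by omega)
      have hx : (0:ℝ) < a (J * l) - β (J + 1) := by linarith
      rw [hvb0, hvb1] at hkey
      nlinarith [hkey, hx, hβ2]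
  calc (∑ I ∈ Finset.Icc 1 (M - 1), (l * N - 2 - I * k)) +
      (∑ J ∈ Finset.Icc 1 (N - 1), (k * M - J * l))
      = (T1 ∪ T2).card := by
        rw [Finset.card_union_of_disjoint hdisj, hcard1, hcard2]
    _ = (↑(T1 ∪ T2) : Set (ℕ × ℕ)).ncard := (Set.ncard_coe_finset _).symm
    _ ≤ S.ncard := Set.ncard_le_ncard hsub hSfin
end

section
/- For every 1 ≤ t ≤ k and every pair (i,j) with 2 ≤ i ≤ m and i < j ≤ n + t − 1, one has D^(t)[i,j+1] − D^(t)[i−1,j+1] ≠ D^(t−1)[i,j] − D^(t−1)[i−1,j]. (Hence each of the k single-character prepend edits changes the values of Ω(mn) vertical-difference entries of the dynamic programming table, for a total of Θ(kmn) changed entries over the k edits.) -/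
/-- Closed form for the DTW table above (and on) the diagonal: diagonal then along row `i`. -/
noncomputable def Fdtw (a β : ℕ → ℝ) (i j : ℕ) : ℝ :=
  ∑ l ∈ Finset.Icc 1 j, (a (min i l) - β l) ^ 2

/-- Closed form below (and on) the diagonal: diagonal then down column `j`. -/
noncomputable def Gdtw (a β : ℕ → ℝ) (i j : ℕ) : ℝ :=
  ∑ l ∈ Finset.Icc 1 i, (a l - β (min j l)) ^ 2

lemma adj_anti {f : ℕ → ℝ} {m : ℕ} (h : ∀ i, 1 ≤ i → i < m → f (i + 1) < f i) :
    ∀ i j, 1 ≤ i → i < j → j ≤ m → f j < f i := by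
  intro i j hi
  induction j with
  | zero => intro h1 _; exact absurd h1 (by omega)
  | succ j ih =>
    intro hij hjm
    rcases Nat.lt_or_ge i j with h' | h'
    · exact (h j (by omega) (by omega)).trans (ih h' (by omega))
    · have hji : j = i := by omega
      subst hji
      exact h j hi (by omega)

lemma adj_anti_le {f : ℕ → ℝ} {m : ℕ} (h : ∀ i, 1 ≤ i → i < m → f (i + 1) < f i) :
    ∀ i j, 1 ≤ i → i ≤ j → j ≤ m → f j ≤ f i := by
  intro i j hi hij hjm
  rcases Nat.eq_or_lt_of_le hij with h' | h'
  · subst h'; exact le_rfl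
  · exact (adj_anti h i j hi h' hjm).le

lemma adj_mono {f : ℕ → ℝ} {m : ℕ} (h : ∀ i, 1 ≤ i → i < m → f i ≤ f (i + 1)) :
    ∀ i j, 1 ≤ i → i ≤ j → j ≤ m → f i ≤ f j := by
  intro i j hi
  induction j with
  | zero => intro h1 _; exact absurd h1 (by omega)
  | succ j ih =>
    intro hij hjm
    rcases Nat.lt_or_ge i (j + 1) with h' | h'
    · rcases Nat.lt_or_ge i j with h'' | h'' 
      · exact (ih (by omega) (by omega)).trans (h j (by omega) (by omega))
      · have : i = j := by omega
        subst this
        exact h i hi (by omega)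
    · have : i = j + 1 := by omega
      subst this; exact le_refl _

lemma Fdtw_succ (a β : ℕ → ℝ) (i j : ℕ) :
    Fdtw a β i (j + 1) = Fdtw a β i j + (a (min i (j + 1)) - β (j + 1)) ^ 2 :=
  Finset.sum_Icc_succ_top (by omega) _

lemma Gdtw_succ (a β : ℕ → ℝ) (i j : ℕ) :
    Gdtw a β (i + 1) j = Gdtw a β i j + (a (i + 1) - β (min j (i + 1))) ^ 2 :=
  Finset.sum_Icc_succ_top (by omega) _

lemma Fdtw_stab (a β : ℕ → ℝ) {p p' q : ℕ} (h : q ≤ p) (h' : q ≤ p') :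
    Fdtw a β p q = Fdtw a β p' q := by
  refine Finset.sum_congr rfl fun l hl => ?_
  rw [Finset.mem_Icc] at hl
  rw [min_eq_right (by omega), min_eq_right (by omega)]

lemma FG_diag (a β : ℕ → ℝ) (q : ℕ) : Fdtw a β q q = Gdtw a β q q := by
  refine Finset.sum_congr rfl fun l hl => ?_
  rw [Finset.mem_Icc] at hl
  rw [min_eq_right (by omega : l ≤ q)]

section ClosedForm

variable {a β : ℕ → ℝ} {m N : ℕ}
variable (ha : ∀ i j, 1 ≤ i → i < j → j ≤ m → a j < a i)
variable (hβ : ∀ i j, 1 ≤ i → i ≤ j → j ≤ N → β i ≤ β j)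
variable (hab : ∀ i l, 1 ≤ i → i ≤ m → 1 ≤ l → l ≤ N → β l < a i)

include ha hab in
lemma hF_anti : ∀ i q, 1 ≤ i → i + 1 ≤ m → q ≤ N → Fdtw a β (i + 1) q ≤ Fdtw a β i q := by
  intro i q hi him hqN
  refine Finset.sum_le_sum fun l hl => ?_
  rw [Finset.mem_Icc] at hl
  have h1 : 1 ≤ min (i + 1) l := by omega
  have h2 : min (i + 1) l ≤ m := by omega
  have h3 : β l < a (min (i + 1) l) := hab _ _ h1 h2 hl.1 (by omega)
  have h4 : a (min (i + 1) l) ≤ a (min i l) := by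
    rcases le_or_gt l i with h' | h'
    · rw [min_eq_right (by omega), min_eq_right (by omega)]
    · rw [min_eq_left (by omega), min_eq_left (by omega)]
      exact (ha i (i + 1) hi (by omega) him).le
  exact pow_le_pow_left₀ (by linarith) (by linarith) 2

include hβ hab in
lemma hG_anti : ∀ p q, 1 ≤ q → q + 1 ≤ N → p ≤ m → Gdtw a β p (q + 1) ≤ Gdtw a β p q := by
  intro p q hq hqN hpm
  refine Finset.sum_le_sum fun l hl => ?_
  rw [Finset.mem_Icc] at hl
  have h1 : β (min q l) ≤ β (min (q + 1) l) := by
    refine hβ _ _ (by omega) (by omega) (by omega)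
  have h2 : β (min (q + 1) l) < a l := hab l _ hl.1 (by omega) (by omega) (by omega)
  exact pow_le_pow_left₀ (by linarith) (by linarith) 2

include ha hβ hab in
lemma dtw_closed_s16 (D : ℕ → ℕ → ℝ) (hD : DTWTable a β m N D) :
    ∀ i j, 1 ≤ i → i ≤ m → 1 ≤ j → j ≤ N →
      D i j = if i ≤ j then Fdtw a β i j else Gdtw a β i j := by
  obtain ⟨h11, hcol, hrow, hrec⟩ := hD
  have main : ∀ s i j, i + j = s → 1 ≤ i → i ≤ m → 1 ≤ j → j ≤ N →
      D i j = if i ≤ j then Fdtw a β i j else Gdtw a β i j := by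
    intro s
    induction s using Nat.strong_induction_on with
    | _ s IH =>
      intro i j hs hi him hj hjN
      rcases Nat.eq_or_lt_of_le hi with h1 | h1
      · -- i = 1
        subst hs
        subst h1
        rw [if_pos hj]
        rcases Nat.eq_or_lt_of_le hj with hj1 | hj1
        · rw [← hj1]
          rw [h11]
          simp [Fdtw]
        · obtain ⟨j', rfl⟩ : ∃ j', j = j' + 1 := ⟨j - 1, by omega⟩
          have hr := hrow (j' + 1) (by omega) hjN
          simp only [Nat.add_sub_cancel] at hr
          have hIH := IH (1 + j') (by omega) 1 j' rfl (by omega) him (by omega) (by omega)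
          rw [if_pos (by omega)] at hIH
          rw [hr, hIH, Fdtw_succ]
          rw [min_eq_left (by omega)]
      · -- 1 < i
        obtain ⟨i', rfl⟩ : ∃ i', i = i' + 1 := ⟨i - 1, by omega⟩
        rcases Nat.eq_or_lt_of_le hj with hj1 | hj1
        · -- j = 1
          subst hj1
          rw [if_neg (by omega)]
          have hco := hcol (i' + 1) (by omega) him
          simp only [Nat.add_sub_cancel] at hco
          have hIH := IH (i' + 1) (by omega) i' 1 (by omega) (by omega) (by omega) (by omega) (by omega)
          have hD' : D i' 1 = Gdtw a β i' 1 := by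
            rcases Nat.eq_or_lt_of_le (show 1 ≤ i' by omega) with h' | h'
            · rw [← h'] at hIH ⊢
              rw [hIH, if_pos le_rfl, FG_diag]
            · rw [hIH, if_neg (by omega)]
          rw [hco, hD', Gdtw_succ]
          rw [min_eq_left (by omega)]
        · -- 1 < i, 1 < j : use the recurrence
          obtain ⟨j', rfl⟩ : ∃ j', j = j' + 1 := ⟨j - 1, by omega⟩
          have hre := hrec (i' + 1) (j' + 1) (by omega) him (by omega) hjN
          simp only [Nat.add_sub_cancel] at hre
          have hx := IH (i' + 1 + j') (by omega) (i' + 1) j' rfl (by omega) him (by omega) (by omega)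
          have hy := IH (i' + (j' + 1)) (by omega) i' (j' + 1) rfl (by omega) (by omega) (by omega) (by omega)
          have hz := IH (i' + j') (by omega) i' j' rfl (by omega) (by omega) (by omega) (by omega)
          rcases Nat.lt_trichotomy i' j' with hij | hij | hij
          · -- i < j
            rw [if_pos (by omega)] at hx hy hz ⊢
            have e1 : Fdtw a β (i' + 1) j' ≤ Fdtw a β i' j' :=
              hF_anti ha hab i' j' (by omega) him (by omega)
            have e2 : Fdtw a β i' j' ≤ Fdtw a β i' (j' + 1) := by
              rw [Fdtw_succ]; nlinarith [sq_nonneg (a (min i' (j' + 1)) - β (j' + 1))]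
            rw [hre, hx, hy, hz, min_eq_left (e1.trans e2), min_eq_left e1]
            rw [Fdtw_succ, min_eq_left (by omega)]
          · -- i = j (i' = j')
            subst hij
            rw [if_neg (by omega)] at hx
            rw [if_pos (by omega)] at hy hz
            rw [if_pos (by omega)]
            have e1 : Fdtw a β i' i' ≤ Gdtw a β (i' + 1) i' := by
              rw [FG_diag, Gdtw_succ]
              nlinarith [sq_nonneg (a (i' + 1) - β (min i' (i' + 1)))]
            have e2 : Fdtw a β i' i' ≤ Fdtw a β i' (i' + 1) := by
              rw [Fdtw_succ]; nlinarith [sq_nonneg (a (min i' (i' + 1)) - β (i' + 1))]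
            rw [hre, hx, hy, hz, min_eq_right (le_min e1 e2)]
            have : Fdtw a β (i' + 1) (i' + 1) = Fdtw a β (i' + 1) i' + (a (min (i' + 1) (i' + 1)) - β (i' + 1)) ^ 2 := Fdtw_succ a β _ _
            rw [this, min_self,
              show Fdtw a β (i' + 1) i' = Fdtw a β i' i' from Fdtw_stab a β (by omega) le_rfl]
          · -- i > j
            rw [if_neg (by omega)] at hx hz
            rw [if_neg (by omega)]
            have hy' : D i' (j' + 1) = Gdtw a β i' (j' + 1) := by
              rcases Nat.eq_or_lt_of_le (show j' + 1 ≤ i' by omega) with h' | h'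
              · rw [hy, if_pos (by omega), ← h', FG_diag]
              · rw [hy, if_neg (by omega)]
            have e1 : Gdtw a β i' (j' + 1) ≤ Gdtw a β i' j' :=
              hG_anti hβ hab i' j' (by omega) (by omega) (by omega)
            have e2 : Gdtw a β i' j' ≤ Gdtw a β (i' + 1) j' := by
              rw [Gdtw_succ]; nlinarith [sq_nonneg (a (i' + 1) - β (min j' (i' + 1)))]
            rw [hre, hx, hy', hz, min_eq_right (e1.trans e2), min_eq_left e1]
            rw [Gdtw_succ, min_eq_left (by omega)]
  intro i j hi him hj hjN
  exact main (i + j) i j rfl hi him hj hjN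

end ClosedForm

lemma F_sub (a β : ℕ → ℝ) (i q : ℕ) (hi : 2 ≤ i) :
    Fdtw a β i q - Fdtw a β (i - 1) q
      = ∑ l ∈ Finset.Icc i q, ((a i - β l) ^ 2 - (a (i - 1) - β l) ^ 2) := by
  unfold Fdtw
  rw [← Finset.sum_sub_distrib]
  rw [← Finset.sum_subset (Finset.Icc_subset_Icc_left (by omega : 1 ≤ i))]
  · refine Finset.sum_congr rfl fun l hl => ?_
    rw [Finset.mem_Icc] at hl
    rw [min_eq_left (by omega), min_eq_left (by omega)]
  · intro l hl hnl
    rw [Finset.mem_Icc] at hl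
    rw [Finset.mem_Icc] at hnl
    have : l < i := by omega
    rw [min_eq_right (by omega), min_eq_right (by omega), sub_self]

/-- The prepended sequence B^(t). -/
noncomputable def betaSeq (b c : ℕ → ℝ) (t : ℕ) : ℕ → ℝ :=
  fun j => if j ≤ t then c (t + 1 - j) else b (j - t)

lemma betaSeq_shift (b c : ℕ → ℝ) (t l : ℕ) (ht : 1 ≤ t) (hl : 2 ≤ l) :
    betaSeq b c t l = betaSeq b c (t - 1) (l - 1) := by
  unfold betaSeq
  by_cases h : l ≤ t
  · rw [if_pos h, if_pos (by omega)]
    congr 1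
    omega
  · rw [if_neg h, if_neg (by omega)]
    congr 1
    omega

theorem stmt_16 (a b c : ℕ → ℝ) (m n k : ℕ) (hm : 2 ≤ m) (hn : 2 ≤ n) (hk : 1 ≤ k)
    (hA : ∀ i, 1 ≤ i → i < m → a (i + 1) < a i)
    (hB : ∀ j, 1 ≤ j → j < n → b j ≤ b (j + 1))
    (hAB : b n < a m)
    (hc : ∀ t, 1 ≤ t → t < k → c (t + 1) < c t)
    (hcb : c 1 < b 1)
    (Dt : ℕ → ℕ → ℕ → ℝ)
    (hDt : ∀ t, t ≤ k →
      DTWTable a (fun j => if j ≤ t then c (t + 1 - j) else b (j - t)) m (n + t) (Dt t)) :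
    ∀ t, 1 ≤ t → t ≤ k → ∀ i j, 2 ≤ i → i ≤ m → i < j → j ≤ n + t - 1 →
      Dt t i (j + 1) - Dt t (i - 1) (j + 1) ≠ Dt (t - 1) i j - Dt (t - 1) (i - 1) j := by
  -- global monotonicity facts
  have ha : ∀ i j, 1 ≤ i → i < j → j ≤ m → a j < a i := adj_anti hA
  have ha' : ∀ i j, 1 ≤ i → i ≤ j → j ≤ m → a j ≤ a i := adj_anti_le hA
  have hb' : ∀ i j, 1 ≤ i → i ≤ j → j ≤ n → b i ≤ b j := adj_mono hB
  have hc' : ∀ i j, 1 ≤ i → i ≤ j → j ≤ k → c j ≤ c i := adj_anti_le hc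
  -- monotonicity of prepended sequences
  have hβmono : ∀ t, t ≤ k → ∀ p q, 1 ≤ p → p ≤ q → q ≤ n + t →
      betaSeq b c t p ≤ betaSeq b c t q := by
    intro t htk p q hp hpq hq
    unfold betaSeq
    by_cases h1 : p ≤ t
    · by_cases h2 : q ≤ t
      · rw [if_pos h1, if_pos h2]
        exact hc' (t + 1 - q) (t + 1 - p) (by omega) (by omega) (by omega)
      · rw [if_pos h1, if_neg h2]
        have e1 : c (t + 1 - p) ≤ c 1 := hc' 1 (t + 1 - p) (by omega) (by omega) (by omega)
        have e2 : b 1 ≤ b (q - t) := hb' 1 (q - t) (by omega) (by omega) (by omega)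
        linarith
    · rw [if_neg h1, if_neg (by omega)]
      exact hb' (p - t) (q - t) (by omega) (by omega) (by omega)
  have hβlt : ∀ t, t ≤ k → ∀ i l, 1 ≤ i → i ≤ m → 1 ≤ l → l ≤ n + t →
      betaSeq b c t l < a i := by
    intro t htk i l hi him hl hln
    have e1 : betaSeq b c t l ≤ betaSeq b c t (n + t) :=
      hβmono t htk l (n + t) hl (by omega) (le_refl _)
    have e2 : betaSeq b c t (n + t) = b n := by
      unfold betaSeq
      rw [if_neg (by omega)]
      congr 1
      omega
    have e3 : a m ≤ a i := ha' i m hi him (le_refl m)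
    rw [e2] at e1
    linarith
  intro t ht1 htk i j hi2 him hij hjle
  obtain ⟨t', rfl⟩ : ∃ t', t = t' + 1 := ⟨t - 1, by omega⟩
  obtain ⟨i', rfl⟩ : ∃ i', i = i' + 1 := ⟨i - 1, by omega⟩
  simp only [Nat.add_sub_cancel]
  have hDtt : DTWTable a (betaSeq b c (t' + 1)) m (n + (t' + 1)) (Dt (t' + 1)) := hDt _ htk
  have hDts : DTWTable a (betaSeq b c t') m (n + t') (Dt t') := hDt t' (by omega)
  have hcf_t := dtw_closed_s16 ha (hβmono (t' + 1) htk) (hβlt (t' + 1) htk) (Dt (t' + 1)) hDtt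
  have hcf_s := dtw_closed_s16 ha (hβmono t' (by omega)) (hβlt t' (by omega)) (Dt t') hDts
  -- rewrite the four table entries via the closed form
  have hv1 : Dt (t' + 1) (i' + 1) (j + 1) = Fdtw a (betaSeq b c (t' + 1)) (i' + 1) (j + 1) := by
    rw [hcf_t (i' + 1) (j + 1) (by omega) him (by omega) (by omega), if_pos (by omega)]
  have hv2 : Dt (t' + 1) i' (j + 1) = Fdtw a (betaSeq b c (t' + 1)) i' (j + 1) := by
    rw [hcf_t i' (j + 1) (by omega) (by omega) (by omega) (by omega), if_pos (by omega)]
  have hv3 : Dt t' (i' + 1) j = Fdtw a (betaSeq b c t') (i' + 1) j := by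
    rw [hcf_s (i' + 1) j (by omega) him (by omega) (by omega), if_pos (by omega)]
  have hv4 : Dt t' i' j = Fdtw a (betaSeq b c t') i' j := by
    rw [hcf_s i' j (by omega) (by omega) (by omega) (by omega), if_pos (by omega)]
  -- the vertical differences as sums
  set g : ℝ → ℝ := fun x => (a (i' + 1) - x) ^ 2 - (a i' - x) ^ 2 with hg
  have hL : Dt (t' + 1) (i' + 1) (j + 1) - Dt (t' + 1) i' (j + 1)
      = ∑ l ∈ Finset.Icc (i' + 1) (j + 1), g (betaSeq b c (t' + 1) l) := by
    rw [hv1, hv2]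
    have := F_sub a (betaSeq b c (t' + 1)) (i' + 1) (j + 1) (by omega)
    simp only [Nat.add_sub_cancel] at this
    exact this
  have hR : Dt t' (i' + 1) j - Dt t' i' j
      = ∑ l ∈ Finset.Icc (i' + 1) j, g (betaSeq b c t' l) := by
    rw [hv3, hv4]
    have := F_sub a (betaSeq b c t') (i' + 1) j (by omega)
    simp only [Nat.add_sub_cancel] at this
    exact this
  -- shift the left sum
  have hshift : ∑ l ∈ Finset.Icc (i' + 1) (j + 1), g (betaSeq b c (t' + 1) l)
      = ∑ l ∈ Finset.Icc i' j, g (betaSeq b c t' l) := by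
    have e1 : ∑ l ∈ Finset.Icc (i' + 1) (j + 1), g (betaSeq b c (t' + 1) l)
        = ∑ l ∈ Finset.Icc (i' + 1) (j + 1), g (betaSeq b c t' (l - 1)) := by
      refine Finset.sum_congr rfl fun l hl => ?_
      rw [Finset.mem_Icc] at hl
      rw [betaSeq_shift b c (t' + 1) l (by omega) (by omega)]
      simp only [Nat.add_sub_cancel]
    rw [e1]
    have e2 : Finset.Icc (i' + 1) (j + 1) = Finset.map (addRightEmbedding 1) (Finset.Icc i' j) := by
      rw [Finset.map_add_right_Icc]
    rw [e2, Finset.sum_map]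
    refine Finset.sum_congr rfl fun l hl => ?_
    simp [addRightEmbedding]
  -- decompose
  have hsplit : ∑ l ∈ Finset.Icc i' j, g (betaSeq b c t' l)
      = g (betaSeq b c t' i') + ∑ l ∈ Finset.Icc (i' + 1) j, g (betaSeq b c t' l) := by
    have : Finset.Icc i' j = insert i' (Finset.Icc (i' + 1) j) := by
      ext l
      simp only [Finset.mem_Icc, Finset.mem_insert]
      omega
    rw [this, Finset.sum_insert (by simp [Finset.mem_Icc])]
  -- the extra term is nonzero
  have hne : g (betaSeq b c t' i') ≠ 0 := by
    have hx : betaSeq b c t' i' < a (i' + 1) :=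
      hβlt t' (by omega) (i' + 1) i' (by omega) him (by omega) (by omega)
    have hy : a (i' + 1) < a i' := ha i' (i' + 1) (by omega) (by omega) him
    have : (a (i' + 1) - betaSeq b c t' i') ^ 2 < (a i' - betaSeq b c t' i') ^ 2 :=
      pow_lt_pow_left₀ (by linarith) (by linarith) (by norm_num)
    simp only [hg]
    intro hcontra
    nlinarith
  intro heq
  apply hne
  have : ∑ l ∈ Finset.Icc i' j, g (betaSeq b c t' l)
      = ∑ l ∈ Finset.Icc (i' + 1) j, g (betaSeq b c t' l) := by
    rw [← hshift, ← hL, heq, hR]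
  rw [this] at hsplit
  linarith
end
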